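/- arXiv:2107.11752 — 11 statements merged into one kernel-verified Lean document; each statement's English description precedes it below -/
import Mathlib

section
/- Let R be an integral domain containing an infinite field (i.e., there is an infinite subfield of R). Then Int(R) = R[x]; that is, every polynomial p over the quotient field K of R satisfying p(r) ∈ R for all r ∈ R has all of its coefficients in (the image of) R. -/
open Polynomial

/-- The ring of integer-valued polynomials `Int(S, R)`, i.e. the subring of `K[x]`
(`K` the fraction field of `R`) of polynomials mapping `S` into (the image of) `R`. -/
def IntPoly (R : Type*) [CommRing R] [IsDomain R] (S : Set R) :
    Subring (Polynomial (FractionRing R)) where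
  carrier := {p : Polynomial (FractionRing R) |
    ∀ s ∈ S, p.eval (algebraMap R (FractionRing R) s) ∈ (algebraMap R (FractionRing R)).range}
  mul_mem' := by
    intro p q hp hq s hs
    simpa [Polynomial.eval_mul] using mul_mem (hp s hs) (hq s hs)
  one_mem' := by
    intro s hs
    simpa using one_mem (algebraMap R (FractionRing R)).range
  add_mem' := by
    intro p q hp hq s hs
    simpa [Polynomial.eval_add] using add_mem (hp s hs) (hq s hs)
  zero_mem' := by
    intro s hs
    simpa using zero_mem (algebraMap R (FractionRing R)).range
  neg_mem' := by
    intro p hp s hs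
    simpa [Polynomial.eval_neg] using neg_mem (hp s hs)

/-- An integral domain is atomic if every nonzero nonunit is a finite product of irreducibles. -/
def IsAtomicDomain (A : Type*) [CommRing A] : Prop :=
  ∀ x : A, x ≠ 0 → ¬IsUnit x →
    ∃ l : Multiset A, (∀ a ∈ l, Irreducible a) ∧ l.prod = x

/-- A ring satisfies the ACCP if every ascending chain of principal ideals stabilizes. -/
def SatisfiesACCP (A : Type*) [CommRing A] : Prop :=
  ∀ f : ℕ → Ideal A, (∀ n, (f n).IsPrincipal) → Monotone f →
    ∃ N, ∀ n, N ≤ n → f n = f N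

/-- Bounded factorization domain: atomic, and each nonzero nonunit has bounded
factorization lengths. -/
def IsBFD (A : Type*) [CommRing A] : Prop :=
  IsAtomicDomain A ∧ ∀ x : A, x ≠ 0 → ¬IsUnit x →
    ∃ N : ℕ, ∀ l : Multiset A, (∀ a ∈ l, Irreducible a) → l.prod = x → Multiset.card l ≤ N

/-- Finite factorization domain: atomic, and every nonzero element has finitely many
divisors up to associates. -/
def IsFFD (A : Type*) [CommRing A] : Prop :=
  IsAtomicDomain A ∧ ∀ x : A, x ≠ 0 → {y : Associates A | y ∣ Associates.mk x}.Finite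

/-- Strong finite factorization domain: every nonzero element has finitely many divisors. -/
def IsSFFD (A : Type*) [CommRing A] : Prop :=
  ∀ x : A, x ≠ 0 → {y : A | y ∣ x}.Finite

/-- Irreducible-finite domain: only finitely many irreducibles up to associates. -/
def IsIFD (A : Type*) [CommRing A] : Prop :=
  (Associates.mk '' {a : A | Irreducible a}).Finite

/-- Cohen–Kaplansky domain: atomic with finitely many irreducibles up to associates. -/
def IsCKD (A : Type*) [CommRing A] : Prop :=
  IsAtomicDomain A ∧ IsIFD A

/-- idf-domain: every nonzero element has finitely many irreducible divisors up to
associates. -/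
def IsIdfDomain (A : Type*) [CommRing A] : Prop :=
  ∀ x : A, x ≠ 0 → (Associates.mk '' {a : A | Irreducible a ∧ a ∣ x}).Finite

/-- Furstenberg domain: every nonzero nonunit has an irreducible divisor. -/
def IsFurstenberg (A : Type*) [CommRing A] : Prop :=
  ∀ x : A, x ≠ 0 → ¬IsUnit x → ∃ a : A, Irreducible a ∧ a ∣ x

/-- If an integral domain `R` contains an infinite field, then
`Int(R) = R[x]`. -/
theorem intPoly_eq_map_range_of_infinite_subfield
    (R : Type*) [CommRing R] [IsDomain R]
    (F : Type*) [Field F] [Infinite F] (ι : F →+* R) :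
    IntPoly R Set.univ = (Polynomial.mapRingHom (algebraMap R (FractionRing R))).range := by
  classical
  set K := FractionRing R
  set φ := algebraMap R K with hφ
  set j : F →+* K := φ.comp ι with hj
  have hjinj : Function.Injective j := j.injective
  apply le_antisymm
  · intro p hp
    obtain ⟨s, hs⟩ := Infinite.exists_subset_card_eq F (p.natDegree + 1)
    have hvs : Set.InjOn (⇑j) ↑s := hjinj.injOn
    have hdeg : p.degree < (s.card : ℕ) := by
      rw [hs]
      exact lt_of_le_of_lt Polynomial.degree_le_natDegree
        (by exact_mod_cast Nat.lt_succ_self p.natDegree)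
    have hinterp := Lagrange.eq_interpolate (f := p) hvs hdeg
    rw [hinterp, Lagrange.interpolate_apply]
    apply Subring.sum_mem
    intro i _
    apply Subring.mul_mem
    · obtain ⟨r, hr⟩ := hp (ι i) (Set.mem_univ _)
      exact ⟨Polynomial.C r, by rw [Polynomial.coe_mapRingHom, Polynomial.map_C, hr]; rfl⟩
    · unfold Lagrange.basis
      apply Subring.prod_mem
      intro k hk
      have hik : i ≠ k := (Finset.mem_erase.mp hk).1.symm
      refine ⟨Polynomial.C (ι ((i - k)⁻¹)) * (Polynomial.X - Polynomial.C (ι k)), ?_⟩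
      have h1 : j ((i - k)⁻¹) = (j i - j k)⁻¹ := by
        rw [map_inv₀, map_sub]
      simp only [Polynomial.coe_mapRingHom, Polynomial.map_mul, Polynomial.map_C,
        Polynomial.map_sub, Polynomial.map_X, Lagrange.basisDivisor]
      rw [show φ (ι ((i - k)⁻¹)) = j ((i-k)⁻¹) from rfl,
        show φ (ι k) = j k from rfl, h1]
  · rintro p ⟨q, rfl⟩ r _
    refine ⟨q.eval r, ?_⟩
    rw [Polynomial.coe_mapRingHom, Polynomial.eval_map, Polynomial.eval₂_at_apply]
end

section
/- Let R be an integral domain that is not a field, and let S be a nonempty subset of R. If Int(S,R) is atomic, then S is infinite. -/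
open Polynomial

lemma mem_intPoly_iff {R : Type*} [CommRing R] [IsDomain R] {S : Set R}
    {p : Polynomial (FractionRing R)} :
    p ∈ IntPoly R S ↔ ∀ s ∈ S, p.eval (algebraMap R (FractionRing R) s) ∈
      (algebraMap R (FractionRing R)).range :=
  Iff.rfl

/-- If `R` is a domain that is not a field, `S` is nonempty, and
`Int(S,R)` is atomic, then `S` is infinite. -/
theorem infinite_of_isAtomicDomain_intPoly
    (R : Type*) [CommRing R] [IsDomain R] (hR : ¬IsField R)
    (S : Set R) (hS : S.Nonempty)
    (h : IsAtomicDomain (IntPoly R S)) : S.Infinite := by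
  classical
  by_contra hinf
  rw [Set.not_infinite] at hinf
  set K := FractionRing R with hK
  set φ : R →+* K := (algebraMap R K : R →+* K) with hφdef
  have hφalg : ∀ s : R, algebraMap R (FractionRing R) s = φ s := fun s => rfl
  have hφinj : Function.Injective φ := IsFractionRing.injective R K
  obtain ⟨s₀, hs₀⟩ := hS
  obtain ⟨d₀, hd₀0, hd₀u⟩ : ∃ d : R, d ≠ 0 ∧ ¬IsUnit d := by
    by_contra hc
    push_neg at hc
    exact hR ⟨exists_pair_ne R, mul_comm, fun {a} ha => (hc a ha).exists_right_inv⟩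
  set Sf : Finset R := hinf.toFinset with hSfdef
  have hmemSf : ∀ s, s ∈ Sf ↔ s ∈ S := fun s => hinf.mem_toFinset
  set n : ℕ := Sf.card with hndef
  have hn : 0 < n := Finset.card_pos.2 ⟨s₀, (hmemSf s₀).2 hs₀⟩
  set P : R := ∏ s ∈ Sf, ∏ t ∈ Sf, (if s = t then (1:R) else s - t) with hPdef
  have hP0 : P ≠ 0 := by
    rw [hPdef]
    rw [Finset.prod_ne_zero_iff]
    intro s _
    rw [Finset.prod_ne_zero_iff]
    intro t _
    by_cases h : s = t
    · simp [h]
    · simp only [if_neg h]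
      exact sub_ne_zero.2 h
  have hdvdP : ∀ s ∈ Sf, ∀ t ∈ Sf, s ≠ t → (s - t) ∣ P := by
    intro s hs t ht hst
    have h1 : (∏ t' ∈ Sf, (if s = t' then (1:R) else s - t')) ∣ P :=
      Finset.dvd_prod_of_mem _ hs
    have h2 : (if s = t then (1:R) else s - t) ∣
        ∏ t' ∈ Sf, (if s = t' then (1:R) else s - t') :=
      Finset.dvd_prod_of_mem _ ht
    rw [if_neg hst] at h2
    exact h2.trans h1
  set d : R := d₀ * P ^ n with hddef
  have hd0 : d ≠ 0 := mul_ne_zero hd₀0 (pow_ne_zero _ hP0)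
  have hφd : φ d ≠ 0 := fun hcon => hd0 (hφinj (by simpa using hcon))
  have hφd₀ : φ d₀ ≠ 0 := fun hcon => hd₀0 (hφinj (by simpa using hcon))
  set g : Polynomial K := ∏ s ∈ Sf, (X - C (φ s)) with hgdef
  have hgm : g.Monic := monic_prod_of_monic _ _ (fun s _ => monic_X_sub_C _)
  have hg0 : g ≠ 0 := hgm.ne_zero
  have hgdeg : g.natDegree = n := by
    rw [hgdef, natDegree_prod _ _ (fun s _ => X_sub_C_ne_zero _)]
    simp [natDegree_X_sub_C, hndef]
  set f : Polynomial K := C (φ d)⁻¹ * g with hfdef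
  have hf0 : f ≠ 0 := mul_ne_zero (by simpa using inv_ne_zero hφd) hg0
  have hfdeg : f.natDegree = n := by
    rw [hfdef, natDegree_C_mul (inv_ne_zero hφd), hgdeg]
  have hflc : f.leadingCoeff = (φ d)⁻¹ := by
    rw [hfdef, leadingCoeff_mul, leadingCoeff_C, hgm.leadingCoeff, mul_one]
  have hevalg : ∀ s ∈ S, g.eval (φ s) = 0 := by
    intro s hs
    rw [hgdef, eval_prod]
    apply Finset.prod_eq_zero ((hmemSf s).2 hs)
    simp
  have hfInt : f ∈ IntPoly R S := by
    rw [mem_intPoly_iff]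
    intro s hs
    rw [hφalg, hfdef, eval_mul, hevalg s hs, mul_zero]
    exact zero_mem _
  have hfsplits : f.Splits := by
    rw [hfdef]
    exact (Splits.C _).mul (Splits.prod (fun s _ => Splits.X_sub_C _))
  have hroots : ∀ r : K, f.eval r = 0 → ∃ s ∈ Sf, r = φ s := by
    intro r hr
    rw [hfdef, eval_mul, eval_C] at hr
    have hgr : g.eval r = 0 := by
      rcases mul_eq_zero.1 hr with hcon | hcon
      · exact absurd hcon (inv_ne_zero hφd)
      · exact hcon
    rw [hgdef, eval_prod] at hgr
    obtain ⟨s, hs, hzero⟩ := Finset.prod_eq_zero_iff.1 hgr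
    refine ⟨s, hs, ?_⟩
    simpa [sub_eq_zero] using hzero
  -- f is a nonzero nonunit of Int(S,R)
  have hfz : (⟨f, hfInt⟩ : IntPoly R S) ≠ 0 := by
    intro hz
    exact hf0 (congrArg Subtype.val hz)
  have hfnu : ¬IsUnit (⟨f, hfInt⟩ : IntPoly R S) := by
    intro hu
    obtain ⟨q, hq⟩ := hu.exists_right_inv
    have h1 : f * (q : Polynomial K) = 1 := by
      have h2 := congrArg Subtype.val hq
      push_cast at h2
      exact_mod_cast h2
    have hufK : IsUnit f := IsUnit.of_mul_eq_one _ h1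
    obtain ⟨r, _, hrf⟩ := Polynomial.isUnit_iff.1 hufK
    have : f.natDegree = 0 := by rw [← hrf, natDegree_C]
    omega
  obtain ⟨l, hlirr, hlprod⟩ := h ⟨f, hfInt⟩ hfz hfnu
  have hprodK : (l.map (fun a : IntPoly R S => (a : Polynomial K))).prod = f := by
    have h2 := map_multiset_prod ((IntPoly R S).subtype) l
    simp only [Subring.coe_subtype] at h2
    rw [← h2, hlprod]
  -- every irreducible factor is nonzero at some point of S
  have hkey : ∀ a : IntPoly R S, a ∈ l → ∃ s ∈ S, ((a : Polynomial K)).eval (φ s) ≠ 0 := by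
    intro a ha
    by_contra hc
    push_neg at hc
    have hirr := hlirr a ha
    have ha0 : (a : Polynomial K) ≠ 0 := fun hcon => hirr.ne_zero (Subtype.ext hcon)
    set E : Polynomial K := C (φ d₀)⁻¹ * (a : Polynomial K) with hEdef
    have hEInt : E ∈ IntPoly R S := by
      rw [mem_intPoly_iff]
      intro s hs
      rw [hφalg, hEdef, eval_mul, hc s hs, mul_zero]
      exact zero_mem _
    have hDInt : (C (φ d₀) : Polynomial K) ∈ IntPoly R S := by
      rw [mem_intPoly_iff]
      intro s hs
      rw [hφalg, eval_C]
      exact ⟨d₀, rfl⟩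
    have hprod : a = (⟨_, hDInt⟩ : IntPoly R S) * ⟨E, hEInt⟩ := by
      apply Subtype.ext
      push_cast
      rw [hEdef, ← mul_assoc, ← C_mul, mul_inv_cancel₀ hφd₀, C_1, one_mul]
    rcases hirr.isUnit_or_isUnit hprod with hu | hu
    · obtain ⟨q, hq⟩ := hu.exists_right_inv
      have h1 : (C (φ d₀) : Polynomial K) * (q : Polynomial K) = 1 := by
        have h2 := congrArg Subtype.val hq
        push_cast at h2
        exact_mod_cast h2
      have h2 : φ d₀ * (q : Polynomial K).eval (φ s₀) = 1 := by
        have h3 := congrArg (Polynomial.eval (φ s₀)) h1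
        simpa using h3
      obtain ⟨c, hcq⟩ := q.2 s₀ hs₀
      apply hd₀u
      apply IsUnit.of_mul_eq_one (a := d₀) c
      apply hφinj
      rw [map_mul, map_one]
      rw [hφalg] at hcq
      rw [hcq, h2]
    · obtain ⟨q, hq⟩ := hu.exists_right_inv
      have h1 : E * (q : Polynomial K) = 1 := by
        have h2 := congrArg Subtype.val hq
        push_cast at h2
        exact_mod_cast h2
      have hEu : IsUnit E := IsUnit.of_mul_eq_one _ h1
      obtain ⟨r, hru, hrE⟩ := Polynomial.isUnit_iff.1 hEu
      have hEeval : E.eval (φ s₀) = 0 := by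
        rw [hEdef, eval_mul, hc s₀ hs₀, mul_zero]
      rw [← hrE, eval_C] at hEeval
      rw [hEeval] at hru
      exact hru.ne_zero rfl
  -- per-factor lemma
  have hfactor : ∀ a : Polynomial K, a ∣ f → a ∈ IntPoly R S →
      (∃ s ∈ S, a.eval (φ s) ≠ 0) →
      ∃ v b : R, b ∣ P ^ a.natDegree ∧ φ v = a.leadingCoeff * φ b := by
    rintro a hdvd haInt ⟨s', hs', hne⟩
    have hs'Sf : s' ∈ Sf := (hmemSf s').2 hs'
    have ha0 : a ≠ 0 := fun hcon => hne (by simp [hcon])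
    have hsplits : a.Splits :=
      Splits.of_dvd hfsplits hf0 hdvd
    have hcard : Multiset.card a.roots = a.natDegree := splits_iff_card_roots.1 hsplits
    have hrootsS : ∀ r ∈ a.roots, ∃ s ∈ Sf, r = φ s ∧ s ≠ s' := by
      intro r hr
      have har : a.eval r = 0 := ((mem_roots'.1 hr).2 : a.IsRoot r)
      have hfr : f.eval r = 0 := by
        obtain ⟨q, hq⟩ := hdvd
        rw [hq, eval_mul, har, zero_mul]
      obtain ⟨s, hsSf, hrs⟩ := hroots r hfr
      refine ⟨s, hsSf, hrs, ?_⟩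
      intro hss'
      apply hne
      rw [← hss', ← hrs]
      exact har
    have heq : a = C a.leadingCoeff * (a.roots.map fun r => X - C r).prod :=
      hsplits.eq_prod_roots
    have heval : a.eval (φ s') =
        a.leadingCoeff * (a.roots.map fun r => φ s' - r).prod := by
      conv_lhs => rw [heq]
      rw [eval_mul, eval_C, eval_multiset_prod, Multiset.map_map,
        show Multiset.map (eval (φ s') ∘ fun r => X - C r) a.roots
            = Multiset.map (fun r => φ s' - r) a.roots from
          Multiset.map_congr rfl (fun r _ => by simp)]
    have hpull : ∀ m : Multiset K, (∀ r ∈ m, ∃ s ∈ Sf, r = φ s ∧ s ≠ s') →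
        ∃ b : R, φ b = (m.map fun r => φ s' - r).prod ∧ b ∣ P ^ (Multiset.card m) := by
      intro m
      induction m using Multiset.induction_on with
      | empty => intro _; exact ⟨1, by simp, by simp⟩
      | cons r m ih =>
        intro hm
        obtain ⟨b, hb1, hb2⟩ := ih (fun r' hr' => hm r' (Multiset.mem_cons_of_mem hr'))
        obtain ⟨s, hsSf, hrs, hss'⟩ := hm r (Multiset.mem_cons_self _ _)
        refine ⟨(s' - s) * b, ?_, ?_⟩
        · rw [Multiset.map_cons, Multiset.prod_cons, map_mul, hb1, map_sub, hrs]
        · rw [Multiset.card_cons, pow_succ']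
          exact mul_dvd_mul (hdvdP s' hs'Sf s hsSf (fun hcon => hss' hcon.symm)) hb2
    obtain ⟨b, hb1, hb2⟩ := hpull a.roots hrootsS
    rw [mem_intPoly_iff] at haInt
    obtain ⟨v, hv⟩ := haInt s' hs'
    rw [hφalg] at hv
    refine ⟨v, b, hcard ▸ hb2, ?_⟩
    rw [hv, heval, hb1]
  -- multiply the per-factor facts over the multiset
  have hmain : ∀ m : Multiset (Polynomial K),
      (∀ a ∈ m, a ≠ 0 ∧ ∃ v b : R, b ∣ P ^ a.natDegree ∧ φ v = a.leadingCoeff * φ b) →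
      ∃ v b : R, b ∣ P ^ m.prod.natDegree ∧ φ v = m.prod.leadingCoeff * φ b := by
    intro m
    induction m using Multiset.induction_on with
    | empty => intro _; exact ⟨1, 1, by simp, by simp⟩
    | cons a m ih =>
      intro hm
      obtain ⟨ha0, v1, b1, hb1, he1⟩ := hm a (Multiset.mem_cons_self _ _)
      obtain ⟨v2, b2, hb2, he2⟩ := ih (fun x hx => hm x (Multiset.mem_cons_of_mem hx))
      have hm0 : m.prod ≠ 0 :=
        Multiset.prod_ne_zero (fun h0 => (hm 0 (Multiset.mem_cons_of_mem h0)).1 rfl)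
      refine ⟨v1 * v2, b1 * b2, ?_, ?_⟩
      · rw [Multiset.prod_cons, natDegree_mul ha0 hm0, pow_add]
        exact mul_dvd_mul hb1 hb2
      · rw [Multiset.prod_cons, leadingCoeff_mul, map_mul, map_mul, he1, he2]
        ring
  obtain ⟨v, b, hbdvd, hvb⟩ :=
    hmain (l.map (fun a : IntPoly R S => (a : Polynomial K))) (by
      intro a ha
      obtain ⟨a₀, ha₀l, rfl⟩ := Multiset.mem_map.1 ha
      have hirr := hlirr a₀ ha₀l
      have ha0 : (a₀ : Polynomial K) ≠ 0 := fun hcon => hirr.ne_zero (Subtype.ext hcon)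
      have hdvdsub : a₀ ∣ (⟨f, hfInt⟩ : IntPoly R S) := hlprod ▸ Multiset.dvd_prod ha₀l
      have hdvd : (a₀ : Polynomial K) ∣ f := by
        obtain ⟨c, hc⟩ := hdvdsub
        refine ⟨(c : Polynomial K), ?_⟩
        have h2 := congrArg Subtype.val hc
        push_cast at h2
        exact_mod_cast h2
      exact ⟨ha0, hfactor _ hdvd a₀.2 (hkey a₀ ha₀l)⟩)
  rw [hprodK] at hbdvd hvb
  rw [hfdeg] at hbdvd
  rw [hflc] at hvb
  -- conclude d ∣ P ^ n, hence d₀ is a unit; contradiction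
  have hdb : d * v = b := by
    apply hφinj
    rw [map_mul, hvb, ← mul_assoc, mul_inv_cancel₀ hφd, one_mul]
  have hdP : d ∣ P ^ n := (Dvd.intro v hdb).trans hbdvd
  obtain ⟨c, hc⟩ := hdP
  rw [hddef] at hc
  have hPn : P ^ n ≠ 0 := pow_ne_zero _ hP0
  apply hd₀u
  apply IsUnit.of_mul_eq_one (a := d₀) c
  apply mul_left_cancel₀ hPn
  rw [mul_one]
  calc P ^ n * (d₀ * c) = d₀ * P ^ n * c := by ring
    _ = P ^ n := hc.symm
end

section
/- For an integral domain R, the ring Int(R) satisfies the ascending chain condition on principal ideals (ACCP) if and only if R satisfies the ACCP. -/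
open Polynomial

section ACCPChar

/-- ACCP is equivalent to the nonexistence of a "bad sequence": an infinite chain of
strictly proper divisors. -/
lemma satisfiesACCP_iff_no_bad_seq (A : Type*) [CommRing A] :
    SatisfiesACCP A ↔ ¬ ∃ a : ℕ → A, ∀ n, a (n + 1) ∣ a n ∧ ¬ a n ∣ a (n + 1) := by
  constructor
  · rintro hA ⟨a, ha⟩
    obtain ⟨N, hN⟩ := hA (fun n => Ideal.span {a n}) (fun n => ⟨⟨a n, rfl⟩⟩)
      (monotone_nat_of_le_succ fun n =>
        Ideal.span_singleton_le_span_singleton.2 (ha n).1)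
    have h := hN (N + 1) (Nat.le_succ N)
    exact (ha N).2 (Ideal.span_singleton_le_span_singleton.1 h.le)
  · intro h f hprin hmono
    by_contra hc
    push_neg at hc
    choose nxt hle hne using hc
    choose g hg0 using fun n => @Submodule.IsPrincipal.principal _ _ _ _ _ (f n) (hprin n)
    have hg : ∀ n, f n = Ideal.span {g n} := fun n => hg0 n
    set idx : ℕ → ℕ := fun k => Nat.rec 0 (fun _ m => nxt m) k with hidx
    have hstep : ∀ k, idx (k + 1) = nxt (idx k) := fun k => rfl
    have hmono' : ∀ k, f (idx k) ≤ f (idx (k + 1)) := fun k => hmono (hle (idx k))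
    apply h
    refine ⟨fun k => g (idx k), fun k => ⟨?_, ?_⟩⟩
    · have h1 : Ideal.span {g (idx k)} ≤ Ideal.span {g (idx (k + 1))} := by
        rw [← hg, ← hg]; exact hmono' k
      exact Ideal.span_singleton_le_span_singleton.1 h1
    · intro hdvd
      have h2 : Ideal.span {g (idx (k + 1))} ≤ Ideal.span {g (idx k)} :=
        Ideal.span_singleton_le_span_singleton.2 hdvd
      rw [← hg, ← hg] at h2
      exact hne (idx k) (le_antisymm h2 (hmono' k))

end ACCPChar

section IntPolyAux

variable (R : Type*) [CommRing R] [IsDomain R]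

local notation "K" => FractionRing R
local notation "φ" => algebraMap R (FractionRing R)

lemma mem_intPoly_univ {p : Polynomial K} :
    p ∈ IntPoly R Set.univ ↔ ∀ s : R, p.eval (φ s) ∈ (φ : R →+* K).range :=
  ⟨fun h s => h s (Set.mem_univ s), fun h s _ => h s⟩

/-- The constant polynomial with value `r` as an element of `IntPoly R Set.univ`. -/
noncomputable def cstIntPoly (r : R) : IntPoly R Set.univ :=
  ⟨Polynomial.C (φ r), fun s _ => by simp⟩

@[simp] lemma coe_cstIntPoly (r : R) :
    ((cstIntPoly R r : IntPoly R Set.univ) : Polynomial K) = Polynomial.C (φ r) := rfl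

end IntPolyAux

/-- `Int(R)` satisfies the ACCP iff `R` satisfies the ACCP. -/

theorem intPoly_satisfiesACCP_iff
    (R : Type*) [CommRing R] [IsDomain R] :
    SatisfiesACCP (IntPoly R Set.univ) ↔ SatisfiesACCP R := by
  rw [satisfiesACCP_iff_no_bad_seq, satisfiesACCP_iff_no_bad_seq]
  have hinj : Function.Injective (algebraMap R (FractionRing R)) := IsFractionRing.injective R _
  apply not_congr
  constructor
  · -- a bad sequence in Int(R) yields a bad sequence in R
    rintro ⟨p, hp⟩
    -- the tail of the sequence consists of nonzero elements
    have hp0 : ∀ n, p (n + 1) ≠ 0 := by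
      intro n h0
      have hz : (0 : IntPoly R Set.univ) ∣ p n := h0 ▸ (hp n).1
      have hpn : p n = 0 := zero_dvd_iff.1 hz
      exact (hp n).2 (by rw [hpn, h0])
    set q : ℕ → IntPoly R Set.univ := fun n => p (n + 1) with hqdef
    have hqbad : ∀ n, q (n + 1) ∣ q n ∧ ¬ q n ∣ q (n + 1) := fun n => hp (n + 1)
    have hq0 : ∀ n, q n ≠ 0 := fun n => hp0 n
    have hqc : ∀ n, (↑(q n) : Polynomial (FractionRing R)) ≠ 0 := by
      intro n h
      exact hq0 n (Subtype.ext h)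
    -- degrees are eventually constant
    have hdvd : ∀ n, (↑(q (n + 1)) : Polynomial (FractionRing R)) ∣ ↑(q n) :=
      fun n => _root_.map_dvd (Subring.subtype _) (hqbad n).1
    have hdle : ∀ n, (↑(q (n + 1)) : Polynomial (FractionRing R)).natDegree ≤
        (↑(q n) : Polynomial (FractionRing R)).natDegree :=
      fun n => Polynomial.natDegree_le_of_dvd (hdvd n) (hqc n)
    have hdmon : ∀ m n, m ≤ n → (↑(q n) : Polynomial (FractionRing R)).natDegree ≤
        (↑(q m) : Polynomial (FractionRing R)).natDegree := by
      intro m n h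
      induction h with
      | refl => exact le_refl _
      | step h ih => exact le_trans (hdle _) ih
    obtain ⟨N, hN⟩ : ∃ N, (↑(q N) : Polynomial (FractionRing R)).natDegree =
        sInf (Set.range (fun n => (↑(q n) : Polynomial (FractionRing R)).natDegree)) :=
      Nat.sInf_mem (Set.range_nonempty _)
    have hdeq : ∀ n, N ≤ n → (↑(q n) : Polynomial (FractionRing R)).natDegree =
        (↑(q N) : Polynomial (FractionRing R)).natDegree := by
      intro n h
      exact le_antisymm (hdmon N n h) (hN ▸ Nat.sInf_le ⟨n, rfl⟩)
    -- the successive quotients are eventually nonzero nonunit constants from R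
    have key : ∀ n, N ≤ n → ∃ e : R, e ≠ 0 ∧ ¬ IsUnit e ∧
        (↑(q n) : Polynomial (FractionRing R)) = ↑(q (n + 1)) * Polynomial.C ((algebraMap R (FractionRing R)) e) := by
      intro n hn
      obtain ⟨c, hc⟩ := (hqbad n).1
      have hcc : (↑(q n) : Polynomial (FractionRing R)) = ↑(q (n + 1)) * ↑c :=
        congrArg Subtype.val hc
      have hc0 : (↑c : Polynomial (FractionRing R)) ≠ 0 := by
        intro h0
        exact hqc n (by rw [hcc, h0, mul_zero])
      have hdc : (↑c : Polynomial (FractionRing R)).natDegree = 0 := by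
        have hmul := Polynomial.natDegree_mul (hqc (n + 1)) hc0
        rw [← hcc] at hmul
        have e1 := hdeq n hn
        have e2 := hdeq (n + 1) (le_trans hn (Nat.le_succ n))
        omega
      obtain ⟨a, ha⟩ := Polynomial.natDegree_eq_zero.1 hdc
      obtain ⟨e, he⟩ : ∃ e : R, (algebraMap R (FractionRing R)) e = a := by
        have hm := (mem_intPoly_univ R).1 c.2 0
        rwa [← ha, Polynomial.eval_C] at hm
      refine ⟨e, ?_, ?_, by rw [hcc, ← ha, he]⟩
      · intro h0
        apply hc0
        rw [← ha, ← he, h0, map_zero, Polynomial.C_0]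
      · intro hu
        obtain ⟨e', he'⟩ := isUnit_iff_exists_inv.1 hu
        apply (hqbad n).2
        refine ⟨cstIntPoly R e', Subtype.ext ?_⟩
        show (↑(q (n + 1)) : Polynomial (FractionRing R)) = ↑(q n) * Polynomial.C ((algebraMap R (FractionRing R)) e')
        rw [hcc, ← ha, ← he, mul_assoc, ← Polynomial.C_mul, ← map_mul, he', map_one,
          Polynomial.C_1, mul_one]
    have key' : ∀ k, ∃ e : R, e ≠ 0 ∧ ¬ IsUnit e ∧
        (↑(q (N + k)) : Polynomial (FractionRing R)) =
          ↑(q (N + k + 1)) * Polynomial.C ((algebraMap R (FractionRing R)) e) :=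
      fun k => key (N + k) (Nat.le_add_right N k)
    choose e he0 heu hee using key'
    -- choose an evaluation point where q N does not vanish
    obtain ⟨r, hr⟩ : ∃ r : R,
        Polynomial.eval ((algebraMap R (FractionRing R)) r) (↑(q N) : Polynomial (FractionRing R)) ≠ 0 := by
      rcases finite_or_infinite R with hF | hI
      · exact absurd (isUnit_iff_exists_inv.2
          ((Finite.isField_of_domain R).mul_inv_cancel (he0 0))) (heu 0)
      · by_contra hall
        push_neg at hall
        have hsub : Set.range (fun r : R => (algebraMap R (FractionRing R)) r) ⊆
            {x | (↑(q N) : Polynomial (FractionRing R)).IsRoot x} := by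
          rintro _ ⟨r, rfl⟩
          exact hall r
        exact Set.not_infinite.2 (Polynomial.finite_setOf_isRoot (hqc N))
          ((Set.infinite_range_of_injective hinj).mono hsub)
    -- the values at r give a bad sequence in R
    have hu' : ∀ k, ∃ u : R,
        (algebraMap R (FractionRing R)) u = Polynomial.eval ((algebraMap R (FractionRing R)) r) (↑(q (N + k)) : Polynomial (FractionRing R)) :=
      fun k => (mem_intPoly_univ R).1 (q (N + k)).2 r
    choose u hu using hu'
    have hrel : ∀ k, u k = u (k + 1) * e k := by
      intro k
      apply hinj
      rw [map_mul, hu k, hee k, Polynomial.eval_mul, Polynomial.eval_C]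
      congr 1
      exact (hu (k + 1)).symm
    have hu0 : ∀ k, u k ≠ 0 := by
      intro k
      induction k with
      | zero =>
        intro h0
        have h1 := hu 0
        rw [h0, map_zero] at h1
        exact hr h1.symm
      | succ k ih =>
        intro h0
        exact ih (by rw [hrel k, h0, zero_mul])
    refine ⟨u, fun n => ⟨⟨e n, hrel n⟩, ?_⟩⟩
    rintro ⟨t, ht⟩
    have h1 : u n * 1 = u n * (t * e n) := by
      rw [mul_one, ← mul_assoc, ← ht, ← hrel n]
    have h2 := mul_left_cancel₀ (hu0 n) h1
    exact heu n (IsUnit.of_mul_eq_one t (by rw [mul_comm]; exact h2.symm))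
  · -- a bad sequence in R yields a bad sequence in Int(R)
    rintro ⟨a, ha⟩
    refine ⟨fun n => cstIntPoly R (a n), fun n => ⟨?_, ?_⟩⟩
    · obtain ⟨c, hc⟩ := (ha n).1
      refine ⟨cstIntPoly R c, Subtype.ext ?_⟩
      show Polynomial.C ((algebraMap R (FractionRing R)) (a n)) = Polynomial.C ((algebraMap R (FractionRing R)) (a (n + 1))) * Polynomial.C ((algebraMap R (FractionRing R)) c)
      rw [← Polynomial.C_mul, ← map_mul, ← hc]
    · rintro ⟨c, hc⟩
      apply (ha n).2
      have hcc : Polynomial.C ((algebraMap R (FractionRing R)) (a (n + 1))) =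
          Polynomial.C ((algebraMap R (FractionRing R)) (a n)) * (↑c : Polynomial (FractionRing R)) :=
        congrArg Subtype.val hc
      have hev := congrArg (Polynomial.eval ((algebraMap R (FractionRing R)) (0 : R))) hcc
      rw [Polynomial.eval_C, Polynomial.eval_mul, Polynomial.eval_C] at hev
      obtain ⟨t, ht⟩ : ∃ t : R,
          (algebraMap R (FractionRing R)) t = Polynomial.eval ((algebraMap R (FractionRing R)) (0 : R)) (↑c : Polynomial (FractionRing R)) :=
        (mem_intPoly_univ R).1 c.2 0
      refine ⟨t, hinj ?_⟩
      rw [map_mul, ht]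
      exact hev
end

section
/- Let R be an integral domain and let S be an infinite subset of R. Then Int(S,R) satisfies the ascending chain condition on principal ideals (ACCP) if and only if R satisfies the ACCP. -/
open Polynomial

section Aux
variable {R : Type*} [CommRing R] [IsDomain R] (S : Set R)

local notation "K" => FractionRing R
local notation "φ" => algebraMap R (FractionRing R)

lemma phi_inj : Function.Injective (algebraMap R (FractionRing R)) :=
  IsFractionRing.injective R (FractionRing R)

/-- constants with `R`-coefficients, as a ring hom into `IntPoly R S`. -/
noncomputable def constC : R →+* IntPoly R S :=
  RingHom.codRestrict ((Polynomial.C : K →+* Polynomial K).comp (algebraMap R K)) (IntPoly R S)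
    (fun r s _ => by simpa using ⟨r, rfl⟩)

@[simp] lemma constC_coe (r : R) :
    ((constC S r : IntPoly R S) : Polynomial K) = Polynomial.C (algebraMap R K r) := rfl

variable {S} {s₀ : R}

noncomputable def evFun (s₀ : R) (p : IntPoly R S) : R :=
  Function.invFun (algebraMap R K) ((p : Polynomial K).eval (algebraMap R K s₀))

lemma phi_evFun (hs₀ : s₀ ∈ S) (p : IntPoly R S) :
    algebraMap R K (evFun s₀ p) = (p : Polynomial K).eval (algebraMap R K s₀) := by
  have := p.2 s₀ hs₀
  obtain ⟨r, hr⟩ := this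
  unfold evFun
  rw [← hr, Function.leftInverse_invFun phi_inj r]

noncomputable def ev (hs₀ : s₀ ∈ S) : IntPoly R S →+* R where
  toFun := evFun s₀
  map_one' := phi_inj <| by simp [phi_evFun hs₀]
  map_mul' x y := phi_inj <| by simp [phi_evFun hs₀]
  map_zero' := phi_inj <| by simp [phi_evFun hs₀]
  map_add' x y := phi_inj <| by simp [phi_evFun hs₀]

lemma phi_ev (hs₀ : s₀ ∈ S) (p : IntPoly R S) :
    algebraMap R K (ev hs₀ p) = (p : Polynomial K).eval (algebraMap R K s₀) :=
  phi_evFun hs₀ p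

@[simp] lemma ev_constC (hs₀ : s₀ ∈ S) (r : R) : ev hs₀ (constC S r) = r :=
  phi_inj <| by simp [phi_ev hs₀]

end Aux

set_option synthInstance.maxHeartbeats 1000000 in
set_option maxHeartbeats 1000000 in
theorem intPoly_satisfiesACCP_iff_of_infinite
    (R : Type*) [CommRing R] [IsDomain R] (S : Set R) (hS : S.Infinite) :
    SatisfiesACCP (IntPoly R S) ↔ SatisfiesACCP R := by
  constructor
  · -- Int(S,R) ACCP → R ACCP
    intro hA f hP hMono
    choose r hr using fun n => (hP n).principal
    have hr : ∀ n, f n = Ideal.span {r n} := hr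
    obtain ⟨s₀, hs₀⟩ := hS.nonempty
    obtain ⟨N, hN⟩ := hA (fun n => Ideal.span {constC S (r n)})
      (fun n => ⟨_, rfl⟩)
      (fun m n h => Ideal.span_singleton_le_span_singleton.mpr
        (map_dvd (constC S) (Ideal.span_singleton_le_span_singleton.mp
          (by rw [← hr m, ← hr n]; exact hMono h))))
    refine ⟨N, fun n hn => ?_⟩
    have hNn := hN n hn
    have h1 : constC S (r N) ∣ constC S (r n) :=
      Ideal.span_singleton_le_span_singleton.mp (le_of_eq hNn)
    have h2 : constC S (r n) ∣ constC S (r N) :=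
      Ideal.span_singleton_le_span_singleton.mp (ge_of_eq hNn)
    have h1' : r N ∣ r n := by
      have := map_dvd (ev hs₀) h1; simpa using this
    have h2' : r n ∣ r N := by
      have := map_dvd (ev hs₀) h2; simpa using this
    rw [hr n, hr N]
    exact le_antisymm (Ideal.span_singleton_le_span_singleton.mpr h1')
      (Ideal.span_singleton_le_span_singleton.mpr h2')
  · -- R ACCP → Int(S,R) ACCP
    intro hR f hP hMono
    choose p hp using fun n => (hP n).principal
    have hp : ∀ n, f n = Ideal.span {p n} := hp
    have hdvd : ∀ {m n : ℕ}, m ≤ n → p n ∣ p m := fun {m n} h =>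
      Ideal.span_singleton_le_span_singleton.mp (by rw [← hp m, ← hp n]; exact hMono h)
    by_cases hz : ∀ n, p n = 0
    · exact ⟨0, fun n _ => by rw [hp n, hp 0, hz n, hz 0]⟩
    push_neg at hz
    obtain ⟨n₀, hn₀⟩ := hz
    have hne : ∀ n, n₀ ≤ n → p n ≠ 0 := by
      intro n h h0
      exact hn₀ (eq_zero_of_zero_dvd (h0 ▸ hdvd h))
    have hnev : ∀ n, n₀ ≤ n → ((p n : Polynomial (FractionRing R))) ≠ 0 := by
      intro n h
      simpa [ZeroMemClass.coe_eq_zero] using hne n h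
    have hcdvd : ∀ {m n : ℕ}, m ≤ n →
        ((p n : Polynomial (FractionRing R))) ∣ (p m : Polynomial (FractionRing R)) :=
      fun {m n} h => map_dvd (SubringClass.subtype (IntPoly R S)) (hdvd h)
    -- degrees stabilize
    set D : ℕ → ℕ := fun n => ((p (n + n₀) : Polynomial (FractionRing R))).natDegree with hD
    have hanti : ∀ {m n : ℕ}, m ≤ n → D n ≤ D m := by
      intro m n h
      exact Polynomial.natDegree_le_of_dvd (hcdvd (by omega)) (hnev (m + n₀) (by omega))
    obtain ⟨d, ⟨k₁, hk₁⟩, hmin⟩ := Nat.lt_wfRel.wf.has_min (Set.range D) ⟨D 0, 0, rfl⟩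
    have hdeg : ∀ n, k₁ + n₀ ≤ n → ((p n : Polynomial (FractionRing R))).natDegree = d := by
      intro n h
      have h1 : D (n - n₀) ≤ D k₁ := hanti (by omega)
      have h2 : ¬ D (n - n₀) < d := hmin _ ⟨n - n₀, rfl⟩
      have h4 : n - n₀ + n₀ = n := by omega
      have h3 : D (n - n₀) = ((p n : Polynomial (FractionRing R))).natDegree := by
        simp only [hD]
        rw [h4]
      omega
    set n₁ := k₁ + n₀ with hn₁
    -- choose s₀ ∈ S where p n₁ doesn't vanish
    have hroots : {s : R | ((p n₁ : Polynomial (FractionRing R))).eval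
        (algebraMap R (FractionRing R) s) = 0}.Finite := by
      have := Polynomial.finite_setOf_isRoot (hnev n₁ (by omega))
      exact (this.preimage (phi_inj.injOn)).subset (fun s hs => hs)
    obtain ⟨s₀, hs₀S, hs₀r⟩ := (hS.diff hroots).nonempty
    simp only [Set.mem_diff, Set.mem_setOf_eq] at hs₀r
    have hs₀ : s₀ ∈ S := hs₀S
    have hval : ((p n₁ : Polynomial (FractionRing R))).eval
        (algebraMap R (FractionRing R) s₀) ≠ 0 := hs₀r
    set E := ev hs₀ with hE
    -- chain in R
    obtain ⟨N', hN'⟩ := hR (fun k => Ideal.span {E (p (k + n₁))})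
      (fun k => ⟨_, rfl⟩)
      (fun a b h => Ideal.span_singleton_le_span_singleton.mpr (map_dvd E (hdvd (by omega))))
    refine ⟨N' + n₁, fun n hn => ?_⟩
    set a := N' + n₁ with ha
    -- mutual divisibility of values
    have hg := hN' (n - n₁) (by omega)
    beta_reduce at hg
    rw [show n - n₁ + n₁ = n by omega] at hg
    -- E (p n) ≠ 0
    have hEn1 : E (p n₁) ≠ 0 := by
      intro h0
      apply hval
      rw [← phi_ev hs₀, ← hE, h0, map_zero]
    have hEn : E (p n) ≠ 0 := by
      obtain ⟨w, hw⟩ := hdvd (show n₁ ≤ n by omega)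
      intro h0
      apply hEn1
      rw [hw, map_mul, h0, zero_mul]
    -- p a = q * p n, q constant
    obtain ⟨q, hq⟩ := hdvd (show a ≤ n by omega)
    have hqc : (q : Polynomial (FractionRing R)).natDegree = 0 := by
      have hv : ((p a : Polynomial (FractionRing R)))
          = (p n : Polynomial (FractionRing R)) * (q : Polynomial (FractionRing R)) := by
        exact_mod_cast congrArg (Subtype.val) hq
      have hqne : (q : Polynomial (FractionRing R)) ≠ 0 := by
        intro h0
        exact hnev a (by omega) (by rw [hv, h0, mul_zero])
      have := Polynomial.natDegree_mul (hnev n (by omega)) hqne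
      rw [← hv, hdeg a (by omega), hdeg n (by omega)] at this
      omega
    obtain ⟨c, hc⟩ := Polynomial.natDegree_eq_zero.mp hqc
    -- E q is a unit
    have hEq : E (p a) = E (p n) * E q := by rw [hq, map_mul]
    obtain ⟨t, ht⟩ : E (p a) ∣ E (p n) := Ideal.span_singleton_le_span_singleton.mp (le_of_eq hg)
    have hunit : IsUnit (E q) := by
      have h1 : (E q * t) * E (p n) = 1 * E (p n) := by
        rw [one_mul]
        calc (E q * t) * E (p n) = t * (E (p n) * E q) := by ring
        _ = t * E (p a) := by rw [← hEq]
        _ = E (p n) := by rw [ht]; ring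
      exact IsUnit.of_mul_eq_one t (mul_right_cancel₀ hEn h1)
    -- q is a unit in IntPoly
    obtain ⟨v, hv⟩ := hunit.exists_right_inv
    have hcEq : c = algebraMap R (FractionRing R) (E q) := by
      rw [hE, phi_ev hs₀, ← hc, Polynomial.eval_C]
    have hqu : IsUnit q := by
      refine IsUnit.of_mul_eq_one (a := q) (constC S v) (Subtype.ext ?_)
      push_cast
      rw [← hc, constC_coe, ← Polynomial.C_mul, hcEq, ← map_mul, hv, map_one, Polynomial.C_1]
    -- conclude
    rw [hp n, hp a]
    apply Ideal.span_singleton_eq_span_singleton.mpr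
    exact ⟨hqu.unit, by rw [IsUnit.unit_spec, ← hq]⟩
end

section
/- Let (p_n)_{n≥0} be the strictly increasing enumeration of the odd prime numbers (p_0 = 3, p_1 = 5, p_2 = 7, ...), and let M be the additive submonoid of ℚ generated by { 1/(2^n · p_n) : n ≥ 0 }. Then M is atomic (every nonzero element of M is a finite sum of atoms), the atoms of M are exactly the elements 1/(2^n · p_n) for n ≥ 0, and M does not satisfy the ascending chain condition on principal ideals: the chain of ideals (1/2^n + M)_{n≥1} is strictly ascending. -/
open Polynomial

/-- An atom of an additive submonoid `M` of `ℚ`: a nonzero element of `M` that is not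
the sum of two nonzero elements of `M`. -/
def IsAtomOf (M : AddSubmonoid ℚ) (a : ℚ) : Prop :=
  a ∈ M ∧ a ≠ 0 ∧ ∀ b c : ℚ, b ∈ M → c ∈ M → b ≠ 0 → c ≠ 0 → a ≠ b + c

/-- Grams' monoid: the additive submonoid of `ℚ` generated by `1/(2^n * p_n)`, where
`p_n` is the `n`-th odd prime (`p_0 = 3`, `p_1 = 5`, ...). -/
def gramsMonoid : AddSubmonoid ℚ :=
  AddSubmonoid.closure {q : ℚ | ∃ n : ℕ, q = 1 / (2 ^ n * (Nat.nth Nat.Prime (n + 1) : ℚ))}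

namespace Grams

/-- The n-th odd prime. -/
noncomputable def p (n : ℕ) : ℕ := Nat.nth Nat.Prime (n + 1)

/-- The generators. -/
noncomputable def g (n : ℕ) : ℚ := 1 / (2 ^ n * (p n : ℚ))

lemma p_prime (n : ℕ) : (p n).Prime := Nat.prime_nth_prime _

lemma two_lt_p (n : ℕ) : 2 < p n := by
  have h := Nat.nth_strictMono Nat.infinite_setOf_prime (Nat.succ_pos n)
  rwa [Nat.nth_prime_zero_eq_two] at h

lemma p_pos (n : ℕ) : 0 < p n := (p_prime n).pos

lemma p_injective : Function.Injective p := fun a b h => by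
  have := (Nat.nth_strictMono Nat.infinite_setOf_prime).injective h
  omega

lemma g_pos (n : ℕ) : 0 < g n := by
  have := p_pos n
  unfold g
  positivity

lemma gen_set_eq : {q : ℚ | ∃ n : ℕ, q = 1 / (2 ^ n * (Nat.nth Nat.Prime (n + 1) : ℚ))}
    = Set.range g := by
  ext q; simp [g, p, eq_comm]

lemma g_mem (n : ℕ) : g n ∈ gramsMonoid := by
  apply AddSubmonoid.subset_closure
  exact ⟨n, rfl⟩

lemma mem_nonneg {x : ℚ} (hx : x ∈ gramsMonoid) : 0 ≤ x := by
  induction hx using AddSubmonoid.closure_induction with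
  | mem q hq => obtain ⟨n, rfl⟩ := hq; have := (g_pos n).le; rwa [g, p] at this
  | zero => exact le_refl 0
  | add a b _ _ ha hb => exact add_nonneg ha hb

lemma half_pow_mem (n : ℕ) : (1 / 2 ^ n : ℚ) ∈ gramsMonoid := by
  have h : (1 / 2 ^ n : ℚ) = (p n) • g n := by
    have hp : (p n : ℚ) ≠ 0 := by exact_mod_cast (p_pos n).ne'
    rw [nsmul_eq_mul, g]
    field_simp
  rw [h]
  exact AddSubmonoid.nsmul_mem _ (g_mem n) _

/-- integer weights -/
noncomputable def t (N k : ℕ) : ℕ := 2 ^ (N - k) * ∏ j ∈ (Finset.range (N + 1)).erase k, p j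

lemma t_pos (N k : ℕ) : 0 < t N k := by
  apply Nat.mul_pos (pow_pos (by norm_num : (0:ℕ) < 2) _)
  exact Finset.prod_pos fun j _ => p_pos j

lemma p_dvd_t {N k n : ℕ} (hn : n ≤ N) (hk : k ≠ n) : p n ∣ t N k := by
  apply Dvd.dvd.mul_left
  apply Finset.dvd_prod_of_mem
  simp [Finset.mem_erase, hk.symm, Nat.lt_succ_of_le hn]

lemma p_not_dvd_t_self {N n : ℕ} : ¬ p n ∣ t N n := by
  intro h
  rcases (Nat.Prime.dvd_mul (p_prime n)).mp h with h2 | hp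
  · have h3 := (Nat.Prime.dvd_of_dvd_pow (p_prime n)) h2
    have h4 := Nat.le_of_dvd (by norm_num) h3
    have := two_lt_p n
    omega
  · obtain ⟨j, hj, hdvd⟩ := Prime.exists_mem_finset_dvd (p_prime n).prime hp
    have hjn : j ≠ n := (Finset.mem_erase.mp hj).1
    have := ((Nat.prime_dvd_prime_iff_eq (p_prime n) (p_prime j)).mp hdvd)
    exact hjn (p_injective this.symm)

lemma g_mul_D {N k : ℕ} (hk : k ≤ N) :
    g k * (2 ^ N * ∏ j ∈ Finset.range (N + 1), (p j : ℚ)) = (t N k : ℚ) := by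
  have hp : (p k : ℚ) ≠ 0 := by exact_mod_cast (p_pos k).ne'
  have hsplit : (2 : ℚ) ^ N = 2 ^ k * 2 ^ (N - k) := by
    rw [← pow_add]; congr 1; omega
  have hprod : ∏ j ∈ Finset.range (N + 1), (p j : ℚ)
      = (p k : ℚ) * ∏ j ∈ (Finset.range (N + 1)).erase k, (p j : ℚ) :=
    (Finset.mul_prod_erase _ _ (Finset.mem_range.mpr (Nat.lt_succ_of_le hk))).symm
  rw [g, hsplit, hprod, t]
  push_cast
  field_simp

/-- Key lemma: the only representation of `g n` as a sum of generators is itself. -/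
lemma key {s : Multiset ℕ} {n : ℕ} (h : (s.map g).sum = g n) : s = {n} := by
  set N := n + s.sum with hN
  have hmemN : ∀ k ∈ s, k ≤ N := by
    intro k hk
    have : k ≤ s.sum := Multiset.le_sum_of_mem hk  -- maybe wrong name
    omega
  have hnN : n ≤ N := Nat.le_add_right _ _
  set D : ℚ := 2 ^ N * ∏ j ∈ Finset.range (N + 1), (p j : ℚ) with hD
  have hcast : ((s.map (t N)).sum : ℚ) = (s.map g).sum * D := by
    rw [Nat.cast_multiset_sum, Multiset.map_map, ← Multiset.sum_map_mul_right]
    congr 1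
    apply Multiset.map_congr rfl
    intro k hk
    exact (g_mul_D (hmemN k hk)).symm
  have hnat : (s.map (t N)).sum = t N n := by
    have h2 : ((s.map (t N)).sum : ℚ) = (t N n : ℚ) := by
      rw [hcast, h, g_mul_D hnN]
    exact_mod_cast h2
  -- split by count of n
  have hsplit : s = Multiset.replicate (s.count n) n + s.filter (· ≠ n) := by
    conv_lhs => rw [← Multiset.filter_add_not (· = n) s]
    rw [Multiset.filter_eq']
  set a := s.count n with ha
  set r := s.filter (· ≠ n) with hr
  have hsum : a * t N n + ((r.map (t N)).sum) = t N n := by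
    rw [hsplit] at hnat
    simpa [Multiset.map_replicate, Multiset.sum_replicate] using hnat
  have hdvd : p n ∣ (r.map (t N)).sum := by
    apply Multiset.dvd_sum
    intro x hx
    obtain ⟨k, hk, rfl⟩ := Multiset.mem_map.mp hx
    have hks : k ∈ s := (Multiset.mem_filter.mp hk).1
    have hkn : k ≠ n := by simpa using (Multiset.mem_filter.mp hk).2
    exact p_dvd_t hnN hkn
  have htpos := t_pos N n
  have ha1 : a = 1 := by
    have ha0 : a ≠ 0 := by
      intro h0
      rw [h0, zero_mul, zero_add] at hsum
      exact p_not_dvd_t_self (hsum ▸ hdvd)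
    have hle : a ≤ 1 := by
      apply Nat.le_of_mul_le_mul_right _ htpos
      rw [one_mul]
      exact Nat.le.intro hsum
    omega
  have hr0 : r = 0 := by
    rw [ha1, one_mul] at hsum
    have : (r.map (t N)).sum = 0 := by omega
    by_contra hne
    obtain ⟨k, hk⟩ := Multiset.exists_mem_of_ne_zero hne
    have : t N k ≤ (r.map (t N)).sum := Multiset.le_sum_of_mem (Multiset.mem_map_of_mem _ hk)
    have := t_pos N k
    omega
  rw [hsplit, ha1, hr0]
  simp

end Grams

namespace Grams

lemma exists_index_multiset {l : Multiset ℚ} (hl : ∀ a ∈ l, ∃ k, a = g k) :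
    ∃ s : Multiset ℕ, s.map g = l := by
  induction l using Multiset.induction with
  | empty => exact ⟨0, rfl⟩
  | cons a l ih =>
    obtain ⟨k, hk⟩ := hl a (Multiset.mem_cons_self a l)
    obtain ⟨s, hs⟩ := ih fun b hb => hl b (Multiset.mem_cons_of_mem hb)
    exact ⟨k ::ₘ s, by simp [hs, ← hk]⟩

lemma mem_iff {x : ℚ} : x ∈ gramsMonoid ↔ ∃ s : Multiset ℕ, (s.map g).sum = x := by
  constructor
  · intro hx
    obtain ⟨l, hl, hsum⟩ := AddSubmonoid.exists_multiset_of_mem_closure hx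
    have hl' : ∀ a ∈ l, ∃ k, a = g k := fun a ha => hl a ha
    obtain ⟨s, hs⟩ := exists_index_multiset hl'
    exact ⟨s, by rw [hs, hsum]⟩
  · rintro ⟨s, rfl⟩
    exact AddSubmonoid.multiset_sum_mem _ _ fun a ha => by
      obtain ⟨k, _, rfl⟩ := Multiset.mem_map.mp ha
      exact g_mem k

lemma atom_g (n : ℕ) : IsAtomOf gramsMonoid (g n) := by
  refine ⟨g_mem n, (g_pos n).ne', fun b c hb hc hb0 hc0 heq => ?_⟩
  obtain ⟨sb, hsb⟩ := mem_iff.mp hb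
  obtain ⟨sc, hsc⟩ := mem_iff.mp hc
  have hsum : ((sb + sc).map g).sum = g n := by
    rw [Multiset.map_add, Multiset.sum_add, hsb, hsc, ← heq]
  have hkey := key hsum
  have hcard := congrArg Multiset.card hkey
  simp only [Multiset.card_add, Multiset.card_singleton] at hcard
  have hb' : sb ≠ 0 := by rintro rfl; simp at hsb; exact hb0 hsb.symm
  have hc' : sc ≠ 0 := by rintro rfl; simp at hsc; exact hc0 hsc.symm
  have := Multiset.card_pos.mpr hb'
  have := Multiset.card_pos.mpr hc'
  omega

lemma sum_map_g_pos {s : Multiset ℕ} (hs : s ≠ 0) : 0 < (s.map g).sum := by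
  obtain ⟨k, hk⟩ := Multiset.exists_mem_of_ne_zero hs
  obtain ⟨s', rfl⟩ := Multiset.exists_cons_of_mem hk
  rw [Multiset.map_cons, Multiset.sum_cons]
  have : (0:ℚ) ≤ (s'.map g).sum := Multiset.sum_nonneg fun x hx => by
    obtain ⟨j, _, rfl⟩ := Multiset.mem_map.mp hx
    exact (g_pos j).le
  linarith [g_pos k]

lemma atom_iff (a : ℚ) : IsAtomOf gramsMonoid a ↔ ∃ n, a = g n := by
  constructor
  · rintro ⟨hmem, ha0, hsplit⟩
    obtain ⟨s, hs⟩ := mem_iff.mp hmem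
    have hs0 : s ≠ 0 := by rintro rfl; simp at hs; exact ha0 hs.symm
    obtain ⟨k, hk⟩ := Multiset.exists_mem_of_ne_zero hs0
    obtain ⟨s', rfl⟩ := Multiset.exists_cons_of_mem hk
    rcases eq_or_ne s' 0 with rfl | hs'
    · exact ⟨k, by simpa using hs.symm⟩
    · exfalso
      rw [Multiset.map_cons, Multiset.sum_cons] at hs
      refine hsplit (g k) ((s'.map g).sum) (g_mem k) (mem_iff.mpr ⟨s', rfl⟩)
        (g_pos k).ne' (sum_map_g_pos hs').ne' hs.symm
  · rintro ⟨n, rfl⟩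
    exact atom_g n

end Grams

open Grams

/-- Grams' monoid is atomic, its atoms are exactly the generators
`1/(2^n p_n)`, and the chain of principal ideals `(1/2^n + M)` is strictly ascending,
so `M` does not satisfy the ACCP. -/


theorem gramsMonoid_atomic_atoms_and_no_accp :
    (∀ x ∈ gramsMonoid, x ≠ 0 →
      ∃ l : Multiset ℚ, (∀ a ∈ l, IsAtomOf gramsMonoid a) ∧ l.sum = x) ∧
    (∀ a : ℚ, IsAtomOf gramsMonoid a ↔
      ∃ n : ℕ, a = 1 / (2 ^ n * (Nat.nth Nat.Prime (n + 1) : ℚ))) ∧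
    (∀ n : ℕ, 1 ≤ n →
      {x : ℚ | ∃ m ∈ gramsMonoid, x = 1 / 2 ^ n + m}
        ⊆ {x : ℚ | ∃ m ∈ gramsMonoid, x = 1 / 2 ^ (n + 1) + m} ∧
      {x : ℚ | ∃ m ∈ gramsMonoid, x = 1 / 2 ^ n + m}
        ≠ {x : ℚ | ∃ m ∈ gramsMonoid, x = 1 / 2 ^ (n + 1) + m}) := by
  refine ⟨?_, ?_, ?_⟩
  · intro x hx hx0
    obtain ⟨s, hs⟩ := mem_iff.mp hx
    refine ⟨s.map g, fun a ha => ?_, hs⟩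
    obtain ⟨k, _, rfl⟩ := Multiset.mem_map.mp ha
    exact atom_g k
  · intro a
    rw [atom_iff]
    rfl
  · intro n _
    constructor
    · rintro x ⟨m, hm, rfl⟩
      refine ⟨1 / 2 ^ (n + 1) + m, AddSubmonoid.add_mem _ (half_pow_mem (n + 1)) hm, ?_⟩
      rw [← add_assoc]
      congr 1
      rw [pow_succ]
      ring
    · intro heq
      have hmem : (1 / 2 ^ (n + 1) : ℚ) ∈ {x : ℚ | ∃ m ∈ gramsMonoid, x = 1 / 2 ^ (n + 1) + m} :=
        ⟨0, zero_mem _, by ring⟩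
      rw [← heq] at hmem
      obtain ⟨m, hm, hx⟩ := hmem
      have h1 : m = 1 / 2 ^ (n + 1) - 1 / 2 ^ n := by linarith
      have h2 : (1 / 2 ^ (n + 1) : ℚ) < 1 / 2 ^ n := by
        apply div_lt_div_of_pos_left one_pos (by positivity)
        rw [pow_succ]
        nlinarith [pow_pos (show (0:ℚ) < 2 by norm_num) n]
      have := mem_nonneg hm
      rw [h1] at this
      linarith
end

section
/- Let R be an integral domain and let S be an infinite subset of R. Then there exists a sequence (d_n)_{n≥1} of nonzero elements of R such that for every n ≥ 1 and every f ∈ Int(S,R) with deg f = n, the polynomial d_n · f has all of its coefficients in (the image of) R. -/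
open Polynomial

/-- For an infinite `S ⊆ R` there is a sequence `(d_n)` of nonzero
elements of `R` such that `d_n · f` has all coefficients in `R` whenever
`f ∈ Int(S,R)` has degree `n ≥ 1`. -/
theorem exists_pulling_sequence
    (R : Type*) [CommRing R] [IsDomain R] (S : Set R) (hS : S.Infinite) :
    ∃ d : ℕ → R, (∀ n, 1 ≤ n → d n ≠ 0) ∧
      ∀ n, 1 ≤ n → ∀ p : Polynomial (FractionRing R), p ∈ IntPoly R S →
        p.natDegree = n → ∀ k : ℕ,
          algebraMap R (FractionRing R) (d n) * p.coeff k
            ∈ (algebraMap R (FractionRing R)).range := by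
    classical
  set K := FractionRing R
  set φ := algebraMap R K with hφdef
  let e := hS.natEmbedding
  let s : ℕ → R := fun i => (e i : R)
  have hs : Function.Injective s := fun a b h => e.injective (Subtype.ext h)
  refine ⟨fun n => (Matrix.vandermonde (fun i : Fin (n+1) => s i)).det, ?_, ?_⟩
  · intro n _
    rw [Matrix.det_vandermonde_ne_zero_iff]
    intro a b h
    exact Fin.val_injective (hs h)
  · intro n hn p hp hdeg k
    by_cases hk : k ≤ n
    · set kk : Fin (n+1) := ⟨k, by omega⟩ with hkk
      have hr : ∀ i : Fin (n+1), ∃ y : R, φ y = p.eval (φ (s i)) := fun i => hp (s i) (e i).2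
      choose r hrr using hr
      set c : Fin (n+1) → K := fun j => p.coeff j with hc
      set V : Matrix (Fin (n+1)) (Fin (n+1)) K :=
        Matrix.vandermonde (fun i => φ (s i)) with hV
      have hmv : V.mulVec c = fun i => φ (r i) := by
        funext i
        rw [hrr i, Polynomial.eval_eq_sum_range' (n := n+1) (by omega)]
        rw [Matrix.mulVec, ← Fin.sum_univ_eq_sum_range (fun j => p.coeff j * φ (s i) ^ j)]
        simp only [hV, dotProduct, Matrix.vandermonde_apply, hc]
        exact Finset.sum_congr rfl fun j _ => mul_comm _ _
      have h2 : V.det * c kk = (V.updateCol kk (fun i => φ (r i))).det := by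
        rw [← hmv, ← Matrix.cramer_apply, Matrix.cramer_eq_adjugate_mulVec,
          Matrix.mulVec_mulVec, Matrix.adjugate_mul, Matrix.smul_mulVec,
          Matrix.one_mulVec]
        rfl
      have h1 : φ ((Matrix.vandermonde (fun i : Fin (n+1) => s i)).det) = V.det := by
        rw [RingHom.map_det]
        congr 1
        ext i j
        simp [V]
      have h3 : (V.updateCol kk (fun i => φ (r i))).det =
          φ ((Matrix.updateCol (Matrix.vandermonde fun i : Fin (n+1) => s i) kk r).det) := by
        rw [RingHom.map_det]
        congr 1
        rw [RingHom.mapMatrix_apply, Matrix.map_updateCol]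
        ext i j
        simp [V, Matrix.updateCol_apply, Matrix.map_apply, map_pow]
      have : p.coeff k = c kk := rfl
      rw [this, h1, h2, h3]
      exact ⟨_, rfl⟩
    · have : p.coeff k = 0 := p.coeff_eq_zero_of_natDegree_lt (by omega)
      rw [this, mul_zero]; exact ⟨0, map_zero φ⟩
end

section
/- Let R be an integral domain and let S be an infinite subset of R. Then Int(S,R) is a bounded factorization domain if and only if R is a bounded factorization domain. -/
open Polynomial

section BFDLength

variable {A : Type*} [CommRing A] [IsDomain A]

theorem card_le_length (ℓ : A → ℕ)
    (h1 : ∀ x : A, x ≠ 0 → ¬IsUnit x → 1 ≤ ℓ x)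
    (h2 : ∀ x y : A, x ≠ 0 → y ≠ 0 → ℓ x + ℓ y ≤ ℓ (x * y)) :
    ∀ l : Multiset A, (∀ a ∈ l, Irreducible a) → Multiset.card l ≤ ℓ l.prod := by
  intro l
  induction l using Multiset.induction with
  | empty => simp
  | cons a t ih =>
    intro h
    have ha : Irreducible a := h a (Multiset.mem_cons_self a t)
    have ht : ∀ b ∈ t, Irreducible b := fun b hb => h b (Multiset.mem_cons_of_mem hb)
    have htne : t.prod ≠ 0 := Multiset.prod_ne_zero (fun h0 => (ht 0 h0).ne_zero rfl)
    have hsup := h2 a t.prod ha.ne_zero htne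
    have h1a := h1 a ha.ne_zero ha.not_isUnit
    have iht := ih ht
    simp only [Multiset.prod_cons, Multiset.card_cons]
    omega

theorem isBFD_of_length (ℓ : A → ℕ)
    (h1 : ∀ x : A, x ≠ 0 → ¬IsUnit x → 1 ≤ ℓ x)
    (h2 : ∀ x y : A, x ≠ 0 → y ≠ 0 → ℓ x + ℓ y ≤ ℓ (x * y)) :
    IsBFD A := by
  constructor
  · have key : ∀ n : ℕ, ∀ x : A, ℓ x ≤ n → x ≠ 0 → ¬IsUnit x →
        ∃ l : Multiset A, (∀ a ∈ l, Irreducible a) ∧ l.prod = x := by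
      intro n
      induction n with
      | zero => intro x hx h0 hu; have := h1 x h0 hu; omega
      | succ n ih =>
        intro x hx h0 hu
        by_cases hirr : Irreducible x
        · exact ⟨{x}, by simpa using hirr, by simp⟩
        · have hex : ∃ a b : A, x = a * b ∧ ¬IsUnit a ∧ ¬IsUnit b := by
            rw [irreducible_iff] at hirr
            push_neg at hirr
            obtain ⟨a, b, hab, ha, hb⟩ := hirr hu
            exact ⟨a, b, hab, ha, hb⟩
          obtain ⟨a, b, rfl, hua, hub⟩ := hex
          have ha0 : a ≠ 0 := fun h => h0 (by simp [h])
          have hb0 : b ≠ 0 := fun h => h0 (by simp [h])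
          have hab := h2 a b ha0 hb0
          have h1a := h1 a ha0 hua
          have h1b := h1 b hb0 hub
          obtain ⟨la, hla, hpa⟩ := ih a (by omega) ha0 hua
          obtain ⟨lb, hlb, hpb⟩ := ih b (by omega) hb0 hub
          refine ⟨la + lb, ?_, by rw [Multiset.prod_add, hpa, hpb]⟩
          intro c hc
          rcases Multiset.mem_add.mp hc with h | h
          · exact hla c h
          · exact hlb c h
    exact fun x h0 hu => key (ℓ x) x le_rfl h0 hu
  · intro x h0 hu
    refine ⟨ℓ x, fun l hl hprod => ?_⟩
    calc Multiset.card l ≤ ℓ l.prod := card_le_length ℓ h1 h2 l hl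
    _ = ℓ x := by rw [hprod]

variable (A) in
/-- The maximal factorization length (up to associates). -/
noncomputable def bfdLen (x : A) : ℕ :=
  sSup {n : ℕ | ∃ l : Multiset A, (∀ a ∈ l, Irreducible a) ∧
    Associated l.prod x ∧ Multiset.card l = n}

theorem bfdLen_nonempty (hA : IsBFD A) (x : A) (hx : x ≠ 0) :
    {n : ℕ | ∃ l : Multiset A, (∀ a ∈ l, Irreducible a) ∧
      Associated l.prod x ∧ Multiset.card l = n}.Nonempty := by
  by_cases hu : IsUnit x
  · exact ⟨0, 0, by simp, by simpa using (associated_one_iff_isUnit.mpr hu).symm, rfl⟩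
  · obtain ⟨l, hl, hp⟩ := hA.1 x hx hu
    exact ⟨Multiset.card l, l, hl, hp ▸ Associated.refl _, rfl⟩

theorem bfdLen_bddAbove (hA : IsBFD A) (x : A) (hx : x ≠ 0) :
    BddAbove {n : ℕ | ∃ l : Multiset A, (∀ a ∈ l, Irreducible a) ∧
      Associated l.prod x ∧ Multiset.card l = n} := by
  by_cases hu : IsUnit x
  · refine ⟨0, fun n hn => ?_⟩
    obtain ⟨l, hl, hassoc, hcard⟩ := hn
    have hl0 : l = 0 := by
      by_contra h
      obtain ⟨a, ha⟩ := Multiset.exists_mem_of_ne_zero h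
      have hdvd : a ∣ x := (Multiset.dvd_prod ha).trans hassoc.dvd
      exact (hl a ha).not_isUnit (isUnit_of_dvd_unit hdvd hu)
    simp [← hcard, hl0]
  · obtain ⟨N, hN⟩ := hA.2 x hx hu
    refine ⟨N, fun n hn => ?_⟩
    obtain ⟨l, hl, hassoc, hcard⟩ := hn
    obtain ⟨u, hu'⟩ := hassoc
    have hlne : l ≠ 0 := by
      rintro rfl
      simp only [Multiset.prod_zero, one_mul] at hu'
      exact hu (hu' ▸ u.isUnit)
    obtain ⟨a, hal⟩ := Multiset.exists_mem_of_ne_zero hlne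
    obtain ⟨t, rfl⟩ := Multiset.exists_cons_of_mem hal
    have hfact : ((↑u * a) ::ₘ t).prod = x := by
      rw [Multiset.prod_cons]
      rw [Multiset.prod_cons] at hu'
      rw [← hu']; ring
    have hirr : ∀ b ∈ (↑u * a) ::ₘ t, Irreducible b := by
      intro b hb
      rcases Multiset.mem_cons.mp hb with rfl | hb
      · exact (irreducible_isUnit_mul u.isUnit).mpr (hl a (Multiset.mem_cons_self a t))
      · exact hl b (Multiset.mem_cons_of_mem hb)
    have := hN _ hirr hfact
    simpa [← hcard] using this

theorem bfdLen_mem (hA : IsBFD A) (x : A) (hx : x ≠ 0) :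
    ∃ l : Multiset A, (∀ a ∈ l, Irreducible a) ∧
      Associated l.prod x ∧ Multiset.card l = bfdLen A x :=
  Nat.sSup_mem (bfdLen_nonempty hA x hx) (bfdLen_bddAbove hA x hx)

theorem one_le_bfdLen (hA : IsBFD A) (x : A) (hx : x ≠ 0) (hu : ¬IsUnit x) :
    1 ≤ bfdLen A x := by
  obtain ⟨l, hl, hp⟩ := hA.1 x hx hu
  have hlne : l ≠ 0 := by rintro rfl; exact hu (hp ▸ (by simp [Multiset.prod_zero] : ((0 : Multiset A)).prod = 1) ▸ isUnit_one)
  have hcard : 1 ≤ Multiset.card l := by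
    rcases Multiset.card_pos.mpr hlne with h; omega
  exact le_trans hcard (le_csSup (bfdLen_bddAbove hA x hx)
    ⟨l, hl, hp ▸ Associated.refl _, rfl⟩)

theorem bfdLen_superadd (hA : IsBFD A) (x y : A) (hx : x ≠ 0) (hy : y ≠ 0) :
    bfdLen A x + bfdLen A y ≤ bfdLen A (x * y) := by
  obtain ⟨lx, hlx, hax, hcx⟩ := bfdLen_mem hA x hx
  obtain ⟨ly, hly, hay, hcy⟩ := bfdLen_mem hA y hy
  refine le_csSup (bfdLen_bddAbove hA (x * y) (mul_ne_zero hx hy)) ⟨lx + ly, ?_, ?_, ?_⟩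
  · intro a ha
    rcases Multiset.mem_add.mp ha with h | h
    · exact hlx a h
    · exact hly a h
  · rw [Multiset.prod_add]; exact hax.mul_mul hay
  · simp [hcx, hcy]

end BFDLength

section IntPolyAux

variable {R : Type*} [CommRing R] [IsDomain R] {S : Set R}

theorem mem_intPoly {p : Polynomial (FractionRing R)} :
    p ∈ IntPoly R S ↔ ∀ s ∈ S,
      p.eval (algebraMap R (FractionRing R) s) ∈ (algebraMap R (FractionRing R)).range :=
  Iff.rfl

/-- The canonical embedding of `R` into `IntPoly R S` as constants. -/
noncomputable def intC (R : Type*) [CommRing R] [IsDomain R] (S : Set R) :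
    R →+* IntPoly R S :=
  RingHom.codRestrict
    ((Polynomial.C : FractionRing R →+* Polynomial (FractionRing R)).comp
      (algebraMap R (FractionRing R))) (IntPoly R S)
    (fun r => mem_intPoly.mpr fun s _ => by
      simp only [RingHom.comp_apply, eval_C]
      exact ⟨r, rfl⟩)

@[simp] theorem intC_coe (r : R) :
    ((intC R S r : IntPoly R S) : Polynomial (FractionRing R)) =
      C (algebraMap R (FractionRing R) r) := rfl

theorem intC_injective : Function.Injective (intC R S) := by
  intro a b h
  have h' : (C (algebraMap R (FractionRing R) a) : Polynomial (FractionRing R)) =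
      C (algebraMap R (FractionRing R) b) := congrArg Subtype.val h
  exact IsFractionRing.injective R (FractionRing R) (Polynomial.C_injective h')

theorem exists_intC (hS : S.Nonempty) (p : IntPoly R S)
    (hdeg : (p : Polynomial (FractionRing R)).natDegree = 0) :
    ∃ r : R, p = intC R S r := by
  obtain ⟨a, ha⟩ := Polynomial.natDegree_eq_zero.mp hdeg
  obtain ⟨s, hs⟩ := hS
  obtain ⟨r, hr⟩ := p.2 s hs
  have heval : (p : Polynomial (FractionRing R)).eval (algebraMap R (FractionRing R) s) = a := by
    rw [← ha, eval_C]
  refine ⟨r, Subtype.ext ?_⟩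
  rw [← ha, intC_coe]
  congr 1
  rw [hr, heval]

theorem isUnit_intPoly_iff (hS : S.Nonempty) {p : IntPoly R S} :
    IsUnit p ↔ ∃ u : R, IsUnit u ∧ p = intC R S u := by
  constructor
  · intro hp
    obtain ⟨v, hv⟩ := hp
    set q := ((v⁻¹ : (IntPoly R S)ˣ) : IntPoly R S) with hq
    have hpq : p * q = 1 := by rw [← hv, hq]; exact_mod_cast v.mul_inv
    have hpqv : (p : Polynomial (FractionRing R)) * (q : Polynomial (FractionRing R)) = 1 := by
      exact_mod_cast congrArg (Subtype.val) hpq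
    obtain ⟨a, hau, haC⟩ := Polynomial.isUnit_iff.mp (IsUnit.of_mul_eq_one _ hpqv)
    obtain ⟨s, hs⟩ := hS
    obtain ⟨r, hr⟩ := p.2 s hs
    obtain ⟨r', hr'⟩ := q.2 s hs
    have har : algebraMap R (FractionRing R) r = a := by rw [hr, ← haC, eval_C]
    have hmul : a * (q : Polynomial (FractionRing R)).eval (algebraMap R (FractionRing R) s) = 1 := by
      have := congrArg (Polynomial.eval (algebraMap R (FractionRing R) s)) hpqv
      simpa [eval_mul, ← haC, eval_C] using this
    have hrr' : r * r' = 1 := by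
      apply IsFractionRing.injective R (FractionRing R)
      rw [map_mul, map_one, har, hr']
      exact hmul
    exact ⟨r, IsUnit.of_mul_eq_one r' hrr',
      Subtype.ext (by rw [intC_coe, har, haC])⟩
  · rintro ⟨u, hu, rfl⟩
    exact hu.map (intC R S)

theorem isUnit_of_isUnit_intC (hS : S.Nonempty) {r : R}
    (h : IsUnit (intC R S r)) : IsUnit r := by
  obtain ⟨u, hu, heq⟩ := (isUnit_intPoly_iff hS).mp h
  exact intC_injective heq ▸ hu

theorem irreducible_intC_iff (hS : S.Nonempty) {r : R} :
    Irreducible (intC R S r) ↔ Irreducible r := by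
  constructor
  · intro h
    refine ⟨fun hu => h.not_isUnit (hu.map _), fun a b hab => ?_⟩
    have hmul : intC R S r = intC R S a * intC R S b := by rw [← RingHom.map_mul, ← hab]
    rcases h.isUnit_or_isUnit hmul with h' | h'
    · exact Or.inl (isUnit_of_isUnit_intC hS h')
    · exact Or.inr (isUnit_of_isUnit_intC hS h')
  · intro h
    refine ⟨fun hu => h.not_isUnit (isUnit_of_isUnit_intC hS hu), fun p q hpq => ?_⟩
    have hr0 : r ≠ 0 := h.ne_zero
    have hv : (C (algebraMap R (FractionRing R) r) : Polynomial (FractionRing R)) =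
        (p : Polynomial (FractionRing R)) * (q : Polynomial (FractionRing R)) := by
      rw [← intC_coe (S := S), hpq]; rfl
    have hC0 : (C (algebraMap R (FractionRing R) r) : Polynomial (FractionRing R)) ≠ 0 := by
      simp only [ne_eq, Polynomial.C_eq_zero]
      exact fun hh => hr0 (IsFractionRing.injective R (FractionRing R) (by simpa using hh))
    have hp0 : (p : Polynomial (FractionRing R)) ≠ 0 := fun hh => hC0 (by rw [hv, hh, zero_mul])
    have hq0 : (q : Polynomial (FractionRing R)) ≠ 0 := fun hh => hC0 (by rw [hv, hh, mul_zero])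
    have hdeg : (p : Polynomial (FractionRing R)).natDegree +
        (q : Polynomial (FractionRing R)).natDegree = 0 := by
      rw [← Polynomial.natDegree_mul hp0 hq0, ← hv, natDegree_C]
    obtain ⟨a, rfl⟩ := exists_intC hS p (by omega)
    obtain ⟨b, rfl⟩ := exists_intC hS q (by omega)
    have hab : r = a * b := intC_injective (by rw [RingHom.map_mul, hpq])
    rcases h.isUnit_or_isUnit hab with h' | h'
    · exact Or.inl (h'.map (intC R S))
    · exact Or.inr (h'.map (intC R S))

theorem multiset_lift {α β : Type*} (f : α → β) :
    ∀ L : Multiset β, (∀ t ∈ L, ∃ r : α, t = f r) → ∃ l : Multiset α, L = l.map f := by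
  intro L
  induction L using Multiset.induction with
  | empty => exact fun _ => ⟨0, rfl⟩
  | cons a t ih =>
    intro h
    obtain ⟨r, hr⟩ := h a (Multiset.mem_cons_self a t)
    obtain ⟨l, hl⟩ := ih (fun b hb => h b (Multiset.mem_cons_of_mem hb))
    exact ⟨r ::ₘ l, by rw [Multiset.map_cons, ← hr, ← hl]⟩

theorem bfd_of_intPoly_bfd (hS : S.Nonempty) (hT : IsBFD (IntPoly R S)) : IsBFD R := by
  have hintC0 : ∀ x : R, x ≠ 0 → intC R S x ≠ 0 := fun x hx h =>
    hx (intC_injective (by rw [h, RingHom.map_zero]))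
  constructor
  · intro x hx hu
    have hx' := hintC0 x hx
    have hu' : ¬IsUnit (intC R S x) := fun h => hu (isUnit_of_isUnit_intC hS h)
    obtain ⟨L, hL, hprod⟩ := hT.1 _ hx' hu'
    have hvals : ((IntPoly R S).subtype L.prod : Polynomial (FractionRing R)) =
        (L.map (IntPoly R S).subtype).prod := map_multiset_prod _ _
    have h0L : (0 : Polynomial (FractionRing R)) ∉ L.map (IntPoly R S).subtype := by
      intro h
      obtain ⟨t, ht, ht0⟩ := Multiset.mem_map.mp h
      have : t = 0 := Subtype.ext ht0
      exact (hL t ht).ne_zero this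
    have hdegsum : (Multiset.map natDegree (L.map (IntPoly R S).subtype)).sum = 0 := by
      rw [← Polynomial.natDegree_multiset_prod _ h0L, ← hvals, hprod]
      show (C (algebraMap R (FractionRing R) x)).natDegree = 0
      exact natDegree_C _
    have hdeg : ∀ t ∈ L, (t : Polynomial (FractionRing R)).natDegree = 0 := by
      intro t ht
      have := Multiset.sum_eq_zero_iff.mp hdegsum
        ((t : Polynomial (FractionRing R)).natDegree)
        (by
          rw [Multiset.map_map]
          exact Multiset.mem_map.mpr ⟨t, ht, rfl⟩)
      exact this
    obtain ⟨l, rfl⟩ := multiset_lift (intC R S) L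
      (fun t ht => exists_intC hS t (hdeg t ht))
    have hlprod : l.prod = x := by
      apply intC_injective
      have hmp := map_multiset_prod (intC R S) l
      rw [hmp, hprod]
    refine ⟨l, ?_, hlprod⟩
    intro a ha
    exact (irreducible_intC_iff hS).mp (hL _ (Multiset.mem_map.mpr ⟨a, ha, rfl⟩))
  · intro x hx hu
    obtain ⟨N, hN⟩ := hT.2 (intC R S x) (hintC0 x hx)
      (fun h => hu (isUnit_of_isUnit_intC hS h))
    refine ⟨N, fun l hl hprod => ?_⟩
    have := hN (l.map (intC R S))
      (fun a ha => by
        obtain ⟨b, hb, rfl⟩ := Multiset.mem_map.mp ha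
        exact (irreducible_intC_iff hS).mpr (hl b hb))
      (by
        have hmp := map_multiset_prod (intC R S) l
        rw [← hmp, hprod])
    simpa using this

theorem intPoly_bfd_of_bfd (hS : S.Infinite) (hR : IsBFD R) : IsBFD (IntPoly R S) := by
  classical
  have hinj := IsFractionRing.injective R (FractionRing R)
  set ESet : IntPoly R S → Set ℕ := fun p =>
    {n : ℕ | ∃ s ∈ S, ∃ r : R,
      algebraMap R (FractionRing R) r =
        (p : Polynomial (FractionRing R)).eval (algebraMap R (FractionRing R) s) ∧
      r ≠ 0 ∧ bfdLen R r = n} with hESet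
  set ℓT : IntPoly R S → ℕ := fun p =>
    (p : Polynomial (FractionRing R)).natDegree + sInf (ESet p) with hℓT
  have hval0 : ∀ p : IntPoly R S, p ≠ 0 → (p : Polynomial (FractionRing R)) ≠ 0 :=
    fun p hp h => hp (Subtype.ext h)
  have hne : ∀ p : IntPoly R S, p ≠ 0 → (ESet p).Nonempty := by
    intro p hp
    have hex : ∃ s ∈ S,
        (p : Polynomial (FractionRing R)).eval (algebraMap R (FractionRing R) s) ≠ 0 := by
      by_contra h
      push_neg at h
      have himg : ((fun s => algebraMap R (FractionRing R) s) '' S).Infinite :=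
        hS.image hinj.injOn
      have hroots : {x : FractionRing R |
          (p : Polynomial (FractionRing R)).IsRoot x}.Finite :=
        Polynomial.finite_setOf_isRoot (hval0 p hp)
      refine himg (hroots.subset ?_)
      rintro _ ⟨s, hs, rfl⟩
      exact h s hs
    obtain ⟨s, hs, hev⟩ := hex
    obtain ⟨r, hr⟩ := p.2 s hs
    have hr0 : r ≠ 0 := fun h => hev (by rw [← hr, h, map_zero])
    exact ⟨bfdLen R r, s, hs, r, hr, hr0, rfl⟩
  apply isBFD_of_length ℓT
  · -- nonunits have positive length
    intro p hp hu
    rcases Nat.eq_zero_or_pos ((p : Polynomial (FractionRing R)).natDegree) with hd | hd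
    · obtain ⟨r, rfl⟩ := exists_intC hS.nonempty p hd
      have hr0 : r ≠ 0 := fun h => hp (by rw [h, RingHom.map_zero])
      have hru : ¬IsUnit r := fun h => hu (h.map _)
      obtain ⟨s, hs, r', hr', hr'0, hn⟩ := Nat.sInf_mem (hne _ hp)
      have hr'r : r' = r := by
        apply hinj
        rw [hr', intC_coe, eval_C]
      have h1 : 1 ≤ bfdLen R r := one_le_bfdLen hR r hr0 hru
      have : 1 ≤ sInf (ESet (intC R S r)) := by rw [← hn, hr'r]; exact h1
      simp only [hℓT]
      omega
    · simp only [hℓT]; omega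
  · -- superadditivity
    intro p q hp hq
    have hp' := hval0 p hp
    have hq' := hval0 q hq
    have hpq : p * q ≠ 0 := mul_ne_zero hp hq
    have hcoe : ((p * q : IntPoly R S) : Polynomial (FractionRing R)) =
        (p : Polynomial (FractionRing R)) * (q : Polynomial (FractionRing R)) := rfl
    have hdeg : ((p * q : IntPoly R S) : Polynomial (FractionRing R)).natDegree =
        (p : Polynomial (FractionRing R)).natDegree +
        (q : Polynomial (FractionRing R)).natDegree := by
      rw [hcoe, Polynomial.natDegree_mul hp' hq']
    obtain ⟨s, hs, r, hr, hr0, hn⟩ := Nat.sInf_mem (hne _ hpq)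
    obtain ⟨rp, hrp⟩ := p.2 s hs
    obtain ⟨rq, hrq⟩ := q.2 s hs
    have hrr : rp * rq = r := by
      apply hinj
      rw [map_mul, hrp, hrq, hr, hcoe, eval_mul]
    have hrp0 : rp ≠ 0 := fun h => hr0 (by rw [← hrr, h, zero_mul])
    have hrq0 : rq ≠ 0 := fun h => hr0 (by rw [← hrr, h, mul_zero])
    have hle1 : sInf (ESet p) ≤ bfdLen R rp := Nat.sInf_le ⟨s, hs, rp, hrp, hrp0, rfl⟩
    have hle2 : sInf (ESet q) ≤ bfdLen R rq := Nat.sInf_le ⟨s, hs, rq, hrq, hrq0, rfl⟩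
    have hsup : bfdLen R rp + bfdLen R rq ≤ bfdLen R r := by
      rw [← hrr]; exact bfdLen_superadd hR rp rq hrp0 hrq0
    simp only [hℓT]
    omega

end IntPolyAux

/-- For an infinite `S ⊆ R`, `Int(S,R)` is a BFD iff `R` is a BFD. -/
theorem intPoly_isBFD_iff_of_infinite
    (R : Type*) [CommRing R] [IsDomain R] (S : Set R) (hS : S.Infinite) :
    IsBFD (IntPoly R S) ↔ IsBFD R :=
  ⟨bfd_of_intPoly_bfd hS.nonempty, intPoly_bfd_of_bfd hS⟩
end

section
/- Let R be an integral domain and let S be an infinite subset of R. Then Int(S,R) is a finite factorization domain if and only if R is a finite factorization domain. -/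
open Polynomial

section AuxFFD

lemma atomic_of_finDiv {A : Type*} [CommRing A] [IsDomain A]
    (h : ∀ x : A, x ≠ 0 → {y : Associates A | y ∣ Associates.mk x}.Finite) :
    IsAtomicDomain A := by
  classical
  suffices key : ∀ n : ℕ, ∀ x : A, ∀ hx : x ≠ 0, ¬IsUnit x →
      (h x hx).toFinset.card ≤ n →
      ∃ l : Multiset A, (∀ a ∈ l, Irreducible a) ∧ l.prod = x by
    intro x hx hxu
    exact key _ x hx hxu le_rfl
  intro n
  induction n using Nat.strong_induction_on with
  | _ n ih =>
    intro x hx hxu hcard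
    by_cases hirr : Irreducible x
    · exact ⟨{x}, by simpa using hirr, by simp⟩
    · rw [irreducible_iff] at hirr
      push_neg at hirr
      obtain ⟨a, b, hab, ha, hb⟩ := hirr hxu
      have ha0 : a ≠ 0 := by rintro rfl; rw [zero_mul] at hab; exact hx hab
      have hb0 : b ≠ 0 := by rintro rfl; rw [mul_zero] at hab; exact hx hab
      have hsub : ∀ (c d : A) (hc : c ≠ 0), d ≠ 0 → x = c * d → ¬IsUnit d →
          (h c hc).toFinset.card < (h x hx).toFinset.card := by
        intro c d hc hd0 hcd hdu
        apply Finset.card_lt_card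
        rw [Set.Finite.toFinset_ssubset_toFinset]
        constructor
        · intro y hy
          exact hy.trans (Associates.mk_dvd_mk.mpr ⟨d, hcd⟩)
        · intro hcon
          have h2 : x ∣ c := Associates.mk_dvd_mk.mp (hcon (dvd_refl _))
          obtain ⟨e, he⟩ := h2
          have : c * 1 = c * (d * e) := by rw [mul_one, ← mul_assoc, ← hcd, ← he]
          exact hdu (IsUnit.of_mul_eq_one (a := d) e (mul_left_cancel₀ hc this).symm)
      obtain ⟨la, hla, hpa⟩ :=
        ih _ (lt_of_lt_of_le (hsub a b ha0 hb0 hab hb) hcard) a ha0 ha le_rfl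
      obtain ⟨lb, hlb, hpb⟩ :=
        ih _ (lt_of_lt_of_le (hsub b a hb0 ha0 (by rw [hab, mul_comm]) ha) hcard) b hb0 hb le_rfl
      refine ⟨la + lb, ?_, by rw [Multiset.prod_add, hpa, hpb, hab]⟩
      intro c hc
      rcases Multiset.mem_add.mp hc with h' | h'
      · exact hla c h'
      · exact hlb c h'

lemma isFFD_iff_finDiv {A : Type*} [CommRing A] [IsDomain A] :
    IsFFD A ↔ ∀ x : A, x ≠ 0 → {y : Associates A | y ∣ Associates.mk x}.Finite :=
  ⟨fun h => h.2, fun h => ⟨atomic_of_finDiv h, h⟩⟩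

variable (R : Type*) [CommRing R] [IsDomain R] (S : Set R)

/-- Constants as integer-valued polynomials. -/
noncomputable def IntPoly.const : R →+* IntPoly R S :=
  RingHom.codRestrict ((Polynomial.C : _ →+* Polynomial (FractionRing R)).comp
      (algebraMap R (FractionRing R))) (IntPoly R S)
    (fun r s _hs => by
      simp only [RingHom.coe_comp, Function.comp_apply, Polynomial.eval_C]
      exact ⟨r, rfl⟩)

@[simp] lemma IntPoly.const_coe (r : R) :
    ((IntPoly.const R S r : IntPoly R S) : Polynomial (FractionRing R)) =
      Polynomial.C (algebraMap R (FractionRing R) r) := rfl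

lemma IntPoly.mem_spec (p : IntPoly R S) {s : R} (hs : s ∈ S) :
    (p : Polynomial (FractionRing R)).eval (algebraMap R (FractionRing R) s) ∈
      (algebraMap R (FractionRing R)).range := p.2 s hs

/-- Evaluation at a point of `S`, as a ring homomorphism `Int(S,R) → R`. -/
noncomputable def IntPoly.evalAt {s : R} (hs : s ∈ S) : IntPoly R S →+* R where
  toFun p := (IntPoly.mem_spec R S p hs).choose
  map_one' := IsFractionRing.injective R (FractionRing R) (by
    rw [(IntPoly.mem_spec R S 1 hs).choose_spec]
    simp)
  map_mul' p q := IsFractionRing.injective R (FractionRing R) (by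
    rw [(IntPoly.mem_spec R S (p * q) hs).choose_spec, map_mul,
      (IntPoly.mem_spec R S p hs).choose_spec, (IntPoly.mem_spec R S q hs).choose_spec]
    simp [Polynomial.eval_mul])
  map_zero' := IsFractionRing.injective R (FractionRing R) (by
    rw [(IntPoly.mem_spec R S 0 hs).choose_spec]
    simp)
  map_add' p q := IsFractionRing.injective R (FractionRing R) (by
    rw [(IntPoly.mem_spec R S (p + q) hs).choose_spec, map_add,
      (IntPoly.mem_spec R S p hs).choose_spec, (IntPoly.mem_spec R S q hs).choose_spec]
    simp [Polynomial.eval_add])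

lemma IntPoly.evalAt_spec {s : R} (hs : s ∈ S) (p : IntPoly R S) :
    algebraMap R (FractionRing R) (IntPoly.evalAt R S hs p) =
      (p : Polynomial (FractionRing R)).eval (algebraMap R (FractionRing R) s) :=
  (IntPoly.mem_spec R S p hs).choose_spec

lemma IntPoly.evalAt_const {s : R} (hs : s ∈ S) (r : R) :
    IntPoly.evalAt R S hs (IntPoly.const R S r) = r :=
  IsFractionRing.injective R (FractionRing R) (by
    rw [IntPoly.evalAt_spec]
    simp)

end AuxFFD

set_option maxHeartbeats 1000000 in
/-- For an infinite `S ⊆ R`, `Int(S,R)` is an FFD iff `R` is an FFD. -/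
theorem intPoly_isFFD_iff_of_infinite
    (R : Type*) [CommRing R] [IsDomain R] (S : Set R) (hS : S.Infinite) :
    IsFFD (IntPoly R S) ↔ IsFFD R := by
  classical
  have inj : Function.Injective (algebraMap R (FractionRing R)) :=
    IsFractionRing.injective R (FractionRing R)
  obtain ⟨s₀, hs₀⟩ := hS.nonempty
  rw [isFFD_iff_finDiv, isFFD_iff_finDiv]
  constructor
  · -- Int(S,R) has finite divisors → R does
    intro hA x hx
    set φ := IntPoly.const R S with hφ
    set ε := IntPoly.evalAt R S hs₀ with hε
    have hφx : φ x ≠ 0 := by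
      intro hcon
      apply hx
      have := congrArg ε hcon
      rwa [IntPoly.evalAt_const, map_zero] at this
    have hfin := hA (φ x) hφx
    rw [← Set.finite_coe_iff] at hfin ⊢
    refine @Finite.of_injective _ _ hfin
      (fun y : {y : Associates R | y ∣ Associates.mk x} =>
        (⟨Associates.mk (φ (Quot.out y.1)), ?_⟩ :
          {z : Associates (IntPoly R S) | z ∣ Associates.mk (φ x)})) ?_
    · have hdvd : Quot.out y.1 ∣ x := by
        rw [← Associates.mk_dvd_mk, Associates.quot_out]
        exact y.2
      exact Associates.mk_dvd_mk.mpr (map_dvd φ hdvd)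
    · intro y y' hyy
      have h1 : Associates.mk (φ (Quot.out y.1)) = Associates.mk (φ (Quot.out y'.1)) :=
        congrArg Subtype.val hyy
      obtain ⟨u, hu⟩ := Associates.mk_eq_mk_iff_associated.mp h1
      have h2 : Quot.out y.1 * ε u = Quot.out y'.1 := by
        have := congrArg ε hu
        rwa [map_mul, IntPoly.evalAt_const, IntPoly.evalAt_const] at this
      have h3 : Associated (Quot.out y.1) (Quot.out y'.1) := by
        obtain ⟨v, hv⟩ := u.isUnit.map ε
        exact ⟨v, by rw [hv]; exact h2⟩
      apply Subtype.ext
      rw [← Associates.quot_out y.1, ← Associates.quot_out y'.1]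
      exact Associates.mk_eq_mk_iff_associated.mpr h3
  · -- R has finite divisors → Int(S,R) does
    intro hR f hf
    have hf0 : (f : Polynomial (FractionRing R)) ≠ 0 := fun hcon => hf (Subtype.ext hcon)
    -- find a point of S where f does not vanish
    obtain ⟨s, hsS, hfs⟩ :
        ∃ s ∈ S, (f : Polynomial (FractionRing R)).eval (algebraMap R (FractionRing R) s) ≠ 0 := by
      by_contra hcon
      push_neg at hcon
      have hsub : (algebraMap R (FractionRing R)) '' S ⊆
          {x | (f : Polynomial (FractionRing R)).IsRoot x} := by
        rintro _ ⟨s, hsS, rfl⟩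
        exact hcon s hsS
      exact (hS.image inj.injOn) ((Polynomial.finite_setOf_isRoot hf0).subset hsub)
    set ε := IntPoly.evalAt R S hsS with hε
    have hεf : ε f ≠ 0 := by
      intro hcon
      apply hfs
      rw [← IntPoly.evalAt_spec R S hsS f, ← hε, hcon, map_zero]
    -- the set of monic divisors of f in K[x] is finite
    set M : Set (Polynomial (FractionRing R)) :=
      {m | m ∣ (f : Polynomial (FractionRing R)) ∧ m.Monic} with hM
    have hMfin : M.Finite := by
      apply Set.Finite.of_finite_image
        (f := fun m => UniqueFactorizationMonoid.normalizedFactors m)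
      · apply Set.Finite.subset
          (Multiset.finite_toSet
            ((UniqueFactorizationMonoid.normalizedFactors
              (f : Polynomial (FractionRing R))).powerset))
        rintro _ ⟨m, ⟨hmd, hmon⟩, rfl⟩
        simp only [Set.mem_setOf_eq, Multiset.mem_coe, Multiset.mem_powerset]
        exact (UniqueFactorizationMonoid.dvd_iff_normalizedFactors_le_normalizedFactors
          hmon.ne_zero hf0).mp hmd
      · rintro m ⟨hmd, hmon⟩ m' ⟨hmd', hmon'⟩ hEq
        apply Polynomial.eq_of_monic_of_associated hmon hmon'
        have h1 := UniqueFactorizationMonoid.prod_normalizedFactors hmon.ne_zero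
        have h2 := UniqueFactorizationMonoid.prod_normalizedFactors hmon'.ne_zero
        have hEq' : UniqueFactorizationMonoid.normalizedFactors m =
            UniqueFactorizationMonoid.normalizedFactors m' := hEq
        rw [hEq'] at h1
        exact h1.symm.trans h2
    have hfsR := hR (ε f) hεf
    rw [← Set.finite_coe_iff] at hfsR ⊢
    haveI : Finite (↥M) := hMfin.to_subtype
    haveI : Finite (↥{y : Associates R | y ∣ Associates.mk (ε f)}) := hfsR
    -- helper facts about divisors of f
    have hgf : ∀ z : {z : Associates (IntPoly R S) | z ∣ Associates.mk f},
        Quot.out z.1 ∣ f := by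
      intro z
      rw [← Associates.mk_dvd_mk, Associates.quot_out]
      exact z.2
    have hgval : ∀ z : {z : Associates (IntPoly R S) | z ∣ Associates.mk f},
        ((Quot.out z.1 : IntPoly R S) : Polynomial (FractionRing R)) ∣
          (f : Polynomial (FractionRing R)) := by
      intro z
      obtain ⟨h, hh⟩ := hgf z
      exact ⟨(h : Polynomial (FractionRing R)), by exact_mod_cast congrArg Subtype.val hh⟩
    have hgne : ∀ z : {z : Associates (IntPoly R S) | z ∣ Associates.mk f},
        ((Quot.out z.1 : IntPoly R S) : Polynomial (FractionRing R)) ≠ 0 := by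
      intro z hc
      exact hf0 (zero_dvd_iff.mp (hc ▸ hgval z))
    have hgev : ∀ z : {z : Associates (IntPoly R S) | z ∣ Associates.mk f},
        ((Quot.out z.1 : IntPoly R S) : Polynomial (FractionRing R)).eval
          (algebraMap R (FractionRing R) s) ≠ 0 := by
      intro z hc
      apply hfs
      obtain ⟨w, hw⟩ := hgval z
      rw [hw, Polynomial.eval_mul, hc, zero_mul]
    refine Finite.of_injective
      (fun z : {z : Associates (IntPoly R S) | z ∣ Associates.mk f} =>
        ((⟨normalize ((Quot.out z.1 : IntPoly R S) : Polynomial (FractionRing R)),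
            (normalize_associated _).dvd.trans (hgval z),
            Polynomial.monic_normalize (hgne z)⟩ : M),
         (⟨Associates.mk (ε (Quot.out z.1)),
            Associates.mk_dvd_mk.mpr (map_dvd ε (hgf z))⟩ :
          {y : Associates R | y ∣ Associates.mk (ε f)}))) ?_
    intro z z' hzz
    have hfst : normalize ((Quot.out z.1 : IntPoly R S) : Polynomial (FractionRing R)) =
        normalize ((Quot.out z'.1 : IntPoly R S) : Polynomial (FractionRing R)) :=
      congrArg (fun t => (t.1 : Polynomial (FractionRing R))) hzz
    have hsnd : Associates.mk (ε (Quot.out z.1)) = Associates.mk (ε (Quot.out z'.1)) :=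
      congrArg (fun t => (t.2 : Associates R)) hzz
    set g := (Quot.out z.1 : IntPoly R S) with hg
    set g' := (Quot.out z'.1 : IntPoly R S) with hg'
    have hassoc : Associated (g : Polynomial (FractionRing R)) (g' : Polynomial (FractionRing R)) :=
      ((normalize_associated (g : Polynomial (FractionRing R))).symm.trans
        (hfst ▸ normalize_associated (g' : Polynomial (FractionRing R))))
    obtain ⟨u, hu⟩ := hassoc
    obtain ⟨k, hk_unit, hk⟩ := Polynomial.isUnit_iff.mp u.isUnit
    obtain ⟨v, hv⟩ := Associates.mk_eq_mk_iff_associated.mp hsnd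
    -- evaluate both identities at s
    have he1 : (g' : Polynomial (FractionRing R)).eval (algebraMap R (FractionRing R) s) =
        (g : Polynomial (FractionRing R)).eval (algebraMap R (FractionRing R) s) * k := by
      rw [← hu, ← hk, Polynomial.eval_mul, Polynomial.eval_C]
    have he2 : (g' : Polynomial (FractionRing R)).eval (algebraMap R (FractionRing R) s) =
        (g : Polynomial (FractionRing R)).eval (algebraMap R (FractionRing R) s) *
          algebraMap R (FractionRing R) (v : R) := by
      rw [← IntPoly.evalAt_spec R S hsS g', ← IntPoly.evalAt_spec R S hsS g, ← hε, ← hv,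
        map_mul]
    have hkv : k = algebraMap R (FractionRing R) (v : R) :=
      mul_left_cancel₀ (hgev z) (he1.symm.trans he2)
    have hgg' : g' = g * IntPoly.const R S (v : R) := by
      apply Subtype.ext
      show (g' : Polynomial (FractionRing R)) =
        (g : Polynomial (FractionRing R)) * Polynomial.C (algebraMap R (FractionRing R) (v : R))
      rw [← hu, ← hk, hkv]
    have hassoc2 : Associated g g' := by
      obtain ⟨w, hw⟩ := (v.isUnit).map (IntPoly.const R S)
      exact ⟨w, by rw [hw]; exact hgg'.symm⟩
    apply Subtype.ext
    rw [← Associates.quot_out z.1, ← Associates.quot_out z'.1]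
    exact Associates.mk_eq_mk_iff_associated.mpr hassoc2
end

section
/- Let R be an integral domain and let S be an infinite subset of R. Then Int(S,R) is a strong finite factorization domain if and only if R is a strong finite factorization domain. -/
open Polynomial

namespace IntPolySFFD

variable {R : Type*} [CommRing R] [IsDomain R] (S : Set R)

noncomputable abbrev K (R : Type*) [CommRing R] [IsDomain R] := FractionRing R

/-- The constant embedding `R →+* IntPoly R S`. -/
noncomputable def constHom : R →+* IntPoly R S :=
  RingHom.codRestrict ((Polynomial.C : K R →+* Polynomial (K R)).comp
    (algebraMap R (K R))) (IntPoly R S) (by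
      intro a s hs
      simp only [RingHom.comp_apply, Polynomial.eval_C]
      exact ⟨a, rfl⟩)

lemma constHom_injective : Function.Injective (constHom S) := by
  intro a b h
  have : (Polynomial.C (algebraMap R (K R) a)) = Polynomial.C (algebraMap R (K R) b) := by
    exact congrArg Subtype.val h
  exact IsFractionRing.injective R (K R) (Polynomial.C_injective this)

end IntPolySFFD

open IntPolySFFD in
/-- For an infinite `S ⊆ R`, `Int(S,R)` is an SFFD iff `R` is an SFFD. -/
theorem intPoly_isSFFD_iff_of_infinite
    (R : Type*) [CommRing R] [IsDomain R] (S : Set R) (hS : S.Infinite) :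
    IsSFFD (IntPoly R S) ↔ IsSFFD R := by
  set K := FractionRing R
  have halg : Function.Injective (algebraMap R K) := IsFractionRing.injective R K
  constructor
  · -- Int(S,R) SFFD → R SFFD
    intro h r hr
    have hfr : constHom S r ≠ 0 := by
      intro h0
      exact hr (constHom_injective S (by simpa using h0))
    have hfin := h (constHom S r) hfr
    have : {a : R | a ∣ r} ⊆ (constHom S) ⁻¹' {y | y ∣ constHom S r} := by
      intro a ha
      exact map_dvd _ ha
    exact ((hfin.preimage ((constHom_injective S).injOn)).subset this)
  · -- R SFFD → Int(S,R) SFFD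
    intro hR p hp
    classical
    set P : Polynomial K := (p : Polynomial K) with hP
    have hP0 : P ≠ 0 := by
      simpa [hP, ZeroMemClass.coe_eq_zero] using hp
    set n := P.natDegree with hn
    -- choose n+1 points of `algebraMap '' S` where P doesn't vanish
    have himg : ((algebraMap R K) '' S).Infinite := hS.image (halg.injOn)
    have hV : (((algebraMap R K) '' S) \ {x | P.IsRoot x}).Infinite :=
      himg.diff (Polynomial.finite_setOf_isRoot hP0)
    obtain ⟨T, hTsub, hTcard⟩ := hV.exists_subset_card_eq (n + 1)
    -- finite sets of possible values at each point of T
    have hDt : ∀ t ∈ T, Set.Finite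
        {k : K | ∃ a b : R, algebraMap R K a = k ∧ algebraMap R K (a * b) = P.eval t} := by
      intro t ht
      obtain ⟨⟨s, hsS, hst⟩, hroot⟩ := hTsub ht
      obtain ⟨r, hrval⟩ := p.2 s hsS
      have hrP : algebraMap R K r = P.eval t := by rw [← hst]; exact hrval
      have hr0 : r ≠ 0 := by
        intro h0
        apply hroot
        simp only [Set.mem_setOf_eq, Polynomial.IsRoot]
        rw [← hrP, h0, map_zero]
      refine ((hR r hr0).image (algebraMap R K)).subset ?_
      rintro k ⟨a, b, rfl, hab⟩
      exact ⟨a, ⟨b, (halg (hab.trans hrP.symm)).symm⟩, rfl⟩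
    -- the superset of coercions of divisors
    set A : Set (Polynomial K) := {Q | Q.degree ≤ P.degree ∧ ∀ t ∈ T,
        Q.eval t ∈ {k : K | ∃ a b : R, algebraMap R K a = k ∧ algebraMap R K (a * b) = P.eval t}}
      with hA
    have hAfin : A.Finite := by
      set g : Polynomial K → (T → K) := fun Q t => Q.eval t with hg
      have hinj : Set.InjOn g A := by
        intro Q₁ h₁ Q₂ h₂ hgeq
        have hzero : Q₁ - Q₂ = 0 := by
          apply Polynomial.eq_zero_of_natDegree_lt_card_of_eval_eq_zero' (Q₁ - Q₂) T
          · intro t ht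
            have := congrFun hgeq ⟨t, ht⟩
            simp only [hg] at this
            simp [Polynomial.eval_sub, this]
          · have h₁' : (Q₁ - Q₂).natDegree ≤ n := by
              rcases eq_or_ne (Q₁ - Q₂) 0 with h | h
              · simp [h]
              · have : (Q₁ - Q₂).degree ≤ P.degree :=
                  le_trans (Polynomial.degree_sub_le _ _) (max_le h₁.1 h₂.1)
                exact Polynomial.natDegree_le_natDegree this
            omega
        exact sub_eq_zero.mp hzero
      have himg2 : (g '' A).Finite := by
        apply Set.Finite.subset (Set.Finite.pi (fun t : T => hDt t t.2))
        rintro _ ⟨Q, hQ, rfl⟩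
        intro t _
        exact hQ.2 t t.2
      exact Set.Finite.of_finite_image himg2 hinj
    -- divisors of p inject into A
    have hsub : {y : IntPoly R S | y ∣ p} ⊆ (Subtype.val) ⁻¹' A := by
      rintro y ⟨m, hm⟩
      have hYM : P = (y : Polynomial K) * (m : Polynomial K) := by
        simpa using congrArg (Subtype.val) hm
      constructor
      · exact Polynomial.degree_le_of_dvd ⟨(m : Polynomial K), hYM⟩ hP0
      · intro t ht
        obtain ⟨⟨s, hsS, hst⟩, -⟩ := hTsub ht
        obtain ⟨a, ha⟩ := y.2 s hsS
        obtain ⟨b, hb⟩ := m.2 s hsS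
        refine ⟨a, b, by rw [← hst]; exact ha, ?_⟩
        rw [hst] at ha hb
        rw [map_mul, ha, hb, hYM, Polynomial.eval_mul]
    exact (hAfin.preimage (Subtype.val_injective.injOn)).subset hsub
end

section
/- For any integral domain R and any subset S of R, the ring Int(S,R) is not a Cohen–Kaplansky domain. -/
open Polynomial

/-- No ring of integer-valued polynomials is a Cohen–Kaplansky domain. -/
theorem intPoly_not_isCKD
    (R : Type*) [CommRing R] [IsDomain R] (S : Set R) :
    ¬ IsCKD (IntPoly R S) := by
  rintro ⟨hAtom, hIFD⟩
  set A := IntPoly R S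
  -- X is an integer-valued polynomial
  have hX : (X : Polynomial (FractionRing R)) ∈ A := by
    intro s hs
    simpa using ⟨s, rfl⟩
  classical
  -- finite set of representatives of irreducibles
  set t : Finset A := hIFD.toFinset.image Quot.out with ht
  have hrep : ∀ a : A, Irreducible a → ∃ p ∈ t, Associated p a := by
    intro a ha
    refine ⟨Quot.out (Associates.mk a), ?_, ?_⟩
    · refine Finset.mem_image.mpr ⟨Associates.mk a, ?_, rfl⟩
      refine (Set.Finite.mem_toFinset (hs := hIFD)).mpr ?_
      exact ⟨a, ha, rfl⟩
    · exact Associates.mk_quot_out a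
  -- every element of t is nonzero
  have htne : ∀ p ∈ t, (p : A) ≠ 0 := by
    intro p hp
    rcases Finset.mem_image.mp hp with ⟨y, hy, rfl⟩
    replace hy := (Set.Finite.mem_toFinset (hs := hIFD)).mp hy
    rcases hy with ⟨a, ha, rfl⟩
    have h := (Associates.mk_quot_out a).symm
    intro h0
    rw [h0] at h
    rcases h with ⟨u, hu⟩
    exact ha.ne_zero (by simpa using hu.symm)
  set xA : A := ⟨X, hX⟩ with hxA
  set P : A := xA * t.prod id with hP
  set f : A := P + 1 with hf
  -- coercion computations
  have hcoeprod : ((t.prod id : A) : Polynomial (FractionRing R))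
      = t.prod (fun p => (p : Polynomial (FractionRing R))) := by
    simpa using map_prod A.subtype id t
  have hcne : ((t.prod id : A) : Polynomial (FractionRing R)) ≠ 0 := by
    rw [hcoeprod]
    refine Finset.prod_ne_zero_iff.mpr ?_
    intro p hp h0
    exact htne p hp (by exact_mod_cast Subtype.ext h0)
  have hfcoe : ((f : A) : Polynomial (FractionRing R))
      = X * ((t.prod id : A) : Polynomial (FractionRing R)) + C 1 := by
    simp [hf, hP, hxA]
  have hdeg : 0 < ((f : A) : Polynomial (FractionRing R)).natDegree := by
    rw [hfcoe, Polynomial.natDegree_add_C, Polynomial.natDegree_mul X_ne_zero hcne,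
      Polynomial.natDegree_X]
    omega
  have hf0 : f ≠ 0 := by
    intro h
    rw [h] at hdeg
    simp at hdeg
  have hfU : ¬IsUnit f := by
    intro h
    have h2 := Polynomial.natDegree_eq_zero_of_isUnit (h.map A.subtype)
    simp only [Subring.coe_subtype] at h2
    omega
  obtain ⟨l, hlirr, hlprod⟩ := hAtom f hf0 hfU
  have hlne : l ≠ 0 := by
    intro h
    rw [h] at hlprod
    exact hfU (hlprod ▸ isUnit_one)
  obtain ⟨q, hq⟩ := Multiset.exists_mem_of_ne_zero hlne
  have hqirr : Irreducible q := hlirr q hq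
  have hqdvd : q ∣ f := hlprod ▸ Multiset.dvd_prod hq
  obtain ⟨p, hpt, hpq⟩ := hrep q hqirr
  have hpdvdf : p ∣ f := hpq.dvd.trans hqdvd
  have hpdvdP : p ∣ P := Dvd.dvd.mul_left (Finset.dvd_prod_of_mem id hpt) xA
  have hpone : p ∣ 1 := by
    have : (1 : A) = f - P := by rw [hf]; ring
    rw [this]
    exact dvd_sub hpdvdf hpdvdP
  exact hqirr.not_isUnit (hpq.isUnit (isUnit_of_dvd_one hpone))
end

section
/- For any integral domain R and any subset S of R, the ring Int(S,R) is not antimatter; that is, Int(S,R) contains an irreducible element. -/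
open Polynomial

lemma aux_irred {K : Type*} [Field K] {A : Subring (Polynomial K)} (p : A)
    (hdeg : (p : Polynomial K).degree = 1)
    (hc : ∀ q r : A, q * r = p → (q : Polynomial K).natDegree = 0 → IsUnit q) :
    Irreducible p := by
  have hp0 : (p : Polynomial K) ≠ 0 := fun h => by simp [h] at hdeg
  constructor
  · intro hu
    have h2 := Polynomial.isUnit_iff_degree_eq_zero.mp (hu.map A.subtype)
    rw [show ((A.subtype p : Polynomial K)).degree = 1 from hdeg] at h2
    simp at h2
  · intro q r hpr
    have hco : (p : Polynomial K) = (q : Polynomial K) * (r : Polynomial K) := by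
      exact_mod_cast congrArg Subtype.val hpr
    have hq0 : (q : Polynomial K) ≠ 0 := by
      intro h; apply hp0; rw [hco, h, zero_mul]
    have hr0 : (r : Polynomial K) ≠ 0 := by
      intro h; apply hp0; rw [hco, h, mul_zero]
    have hnd : (q : Polynomial K).natDegree + (r : Polynomial K).natDegree = 1 := by
      rw [← Polynomial.natDegree_mul hq0 hr0, ← hco,
        Polynomial.natDegree_eq_of_degree_eq_some hdeg]; rfl
    have : (q : Polynomial K).natDegree = 0 ∨ (r : Polynomial K).natDegree = 0 := by omega
    rcases this with h | h
    · exact Or.inl (hc q r hpr.symm h)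
    · exact Or.inr (hc r q (by rw [mul_comm]; exact hpr.symm) h)

/-- No ring of integer-valued polynomials is antimatter: `Int(S,R)`
always contains an irreducible element. -/
theorem intPoly_not_antimatter
    (R : Type*) [CommRing R] [IsDomain R] (S : Set R) :
    ∃ a : IntPoly R S, Irreducible a := by
  classical
  by_cases hS : S.Nonempty
  · obtain ⟨s, hs⟩ := hS
    set K := FractionRing R with hK
    set c : K := 1 - algebraMap R K s with hc
    have hmem : (X + C c) ∈ IntPoly R S := by
      intro t ht
      refine ⟨t - s + 1, ?_⟩
      rw [eval_add, eval_X, eval_C, hc, map_add, map_sub, map_one]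
      ring
    refine ⟨⟨X + C c, hmem⟩, aux_irred _ (Polynomial.degree_X_add_C c) ?_⟩
    intro q r hqr hq
    obtain ⟨u, hu⟩ := q.2 s hs
    obtain ⟨v, hv⟩ := r.2 s hs
    have hco : ((q * r : IntPoly R S) : Polynomial K) = X + C c :=
      congrArg Subtype.val hqr
    have heval : (q : Polynomial K).eval (algebraMap R K s) *
        (r : Polynomial K).eval (algebraMap R K s) = 1 := by
      have h1 : ((q : Polynomial K) * (r : Polynomial K)).eval (algebraMap R K s)
          = (X + C c).eval (algebraMap R K s) := by
        rw [show (q : Polynomial K) * (r : Polynomial K)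
          = ((q * r : IntPoly R S) : Polynomial K) from rfl, hco]
      rw [eval_mul] at h1
      rw [h1]
      simp [hc]
    have huv : u * v = 1 := by
      apply IsFractionRing.injective R K
      rw [map_mul, hu, hv, map_one, heval]
    have hqC : (q : Polynomial K) = C (algebraMap R K u) := by
      have := Polynomial.eq_C_of_natDegree_eq_zero hq
      rw [this] at hu ⊢
      rw [eval_C] at hu
      rw [hu]
    refine IsUnit.of_mul_eq_one (a := q) ⟨C (algebraMap R K v), fun t ht => ⟨v, by simp; rfl⟩⟩ ?_
    apply Subtype.ext
    show (q : Polynomial K) * C (algebraMap R K v) = 1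
    rw [hqC, ← map_mul, ← map_mul, huv, map_one, map_one]
  · -- S is empty : IntPoly R S = everything, X is irreducible
    set K := FractionRing R with hK
    have hS' : S = ∅ := Set.not_nonempty_iff_eq_empty.mp hS
    have hmem : (X : Polynomial K) ∈ IntPoly R S := by
      intro t ht; rw [hS'] at ht; exact absurd ht (Set.notMem_empty t)
    refine ⟨⟨X, hmem⟩, aux_irred _ Polynomial.degree_X ?_⟩
    intro q r hqr hq
    have hco : ((q * r : IntPoly R S) : Polynomial K) = X := congrArg Subtype.val hqr
    have hq0 : (q : Polynomial K) ≠ 0 := by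
      intro h
      have : (X : Polynomial K) = 0 := by
        rw [← hco, show ((q * r : IntPoly R S) : Polynomial K)
          = (q : Polynomial K) * (r : Polynomial K) from rfl, h, zero_mul]
      exact X_ne_zero this
    set d : K := (q : Polynomial K).coeff 0 with hd
    have hqC := Polynomial.eq_C_of_natDegree_eq_zero hq
    have hc0 : d ≠ 0 := by
      intro h; apply hq0; rw [hqC, ← hd, h, map_zero]
    refine IsUnit.of_mul_eq_one (a := q) ⟨C d⁻¹,
      fun t ht => by rw [hS'] at ht; exact absurd ht (Set.notMem_empty t)⟩ ?_
    apply Subtype.ext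
    show (q : Polynomial K) * C d⁻¹ = 1
    rw [hqC, ← hd, ← map_mul, mul_inv_cancel₀ hc0, map_one]
end
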